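/- arXiv:2009.11964 — 3 statements merged into one kernel-verified Lean document; each statement's English description precedes it below -/
import Mathlib

section
/- Let 𝒢 be a groupoid, A a 𝒢-C*-algebra, and φ: ℋ → 𝒢 a faithful groupoid morphism (injective on morphism sets). Regard A as an ℋ-C*-algebra by precomposition with φ. Then the natural *-functor id_A φ: Aℋ → A𝒢, given by x ↦ φ(x) on objects and a u_g ↦ a u_{φ(g)} on morphisms, is isometric for the reduced norms and extends to an isometric C*-functor id_A ⋊_r φ: A ⋊_r ℋ → A ⋊_r 𝒢. In particular, for all x, y ∈ Ob(ℋ), z ∈ Ob(ℋ) with ℋ(z,x) nonempty, and f ∈ Aℋ(x,y), one has ‖Λ_{A,ℋ,z}(f)‖ = ‖Λ_{A,𝒢,φ(z)}((id_A φ)(f))‖. -/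
open CategoryTheory

universe u v

/-- A `𝒢`-C*-algebra: a functor `x ↦ Aₓ` from the (discrete) groupoid `𝒢` to the
category of C*-algebras; the action of `g : x ⟶ y` is denoted `α_g = act g : Aₓ → A_y`. -/
structure GCStarAlg (𝒢 : Type u) [Groupoid 𝒢] where
  fiber : 𝒢 → Type v
  [alg : ∀ x, NonUnitalCStarAlgebra (fiber x)]
  act : ∀ {x y : 𝒢}, (x ⟶ y) → (fiber x ≃⋆ₐ[ℂ] fiber y)
  act_id : ∀ x : 𝒢, act (𝟙 x) = StarAlgEquiv.refl ℂ (fiber x)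
  act_comp : ∀ {x y z : 𝒢} (g : x ⟶ y) (h : y ⟶ z), act (g ≫ h) = (act g).trans (act h)

attribute [instance] GCStarAlg.alg

namespace GCStarAlg

variable {𝒢 : Type u} [Groupoid 𝒢] (A : GCStarAlg 𝒢)

/-- The morphism set `A𝒢(x,y)` of the convolution category: finite formal sums
`Σ aᵢ u_{gᵢ}` with `gᵢ ∈ 𝒢(x,y)` and `aᵢ ∈ A_y`, encoded as finitely supported functions
`g ↦ (coefficient of u_g)`. -/
abbrev Conv (x y : 𝒢) : Type _ := (x ⟶ y) →₀ A.fiber y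

/-- Composition in the convolution category `A𝒢`:
`(a u_g) · (b u_h) = a α_g(b) u_{gh}` (here `gh = h ≫ g`). -/
noncomputable def convMul {x y z : 𝒢} (f₂ : A.Conv y z) (f₁ : A.Conv x y) : A.Conv x z :=
  f₂.sum fun g a => f₁.sum fun h b => Finsupp.single (h ≫ g) (a * A.act g b)

/-- The involution of the convolution category `A𝒢`: `(a u_g)* = α_{g⁻¹}(a)* u_{g⁻¹}`. -/
noncomputable def convStar {x y : 𝒢} (f : A.Conv x y) : A.Conv y x :=
  f.sum fun g a => Finsupp.single (Groupoid.inv g) (star (A.act (Groupoid.inv g) a))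

/-- Finitely supported vectors of the Hilbert `A_z`-module `ℓ²(𝒢(z,x), A_z)`; they form a
dense subspace, so operator norms may be computed on them. -/
abbrev PreL2 (z x : 𝒢) : Type _ := (z ⟶ x) →₀ A.fiber z

/-- The Hilbert-module norm `‖ξ‖ = ‖Σ_h ξ(h)* ξ(h)‖^{1/2}` of a finitely supported vector
of `ℓ²(𝒢(z,x), A_z)`. -/
noncomputable def preNorm {z x : 𝒢} (ξ : A.PreL2 z x) : ℝ :=
  Real.sqrt ‖ξ.sum fun _ b => star b * b‖

/-- The regular representation `Λ_{A,𝒢,z}`: `f ∈ A𝒢(x,y)` maps (finitely supported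
vectors of) `ℓ²(𝒢(z,x), A_z)` to `ℓ²(𝒢(z,y), A_z)` by `(Λ(a u_g) ξ)(h) = α_{h⁻¹}(a) ξ(g⁻¹ h)`. -/
noncomputable def lam {x y z : 𝒢} (f : A.Conv x y) (ξ : A.PreL2 z x) : A.PreL2 z y :=
  f.sum fun g a => ξ.sum fun h b =>
    Finsupp.single (h ≫ g) ((A.act (Groupoid.inv (h ≫ g)) a) * b)

/-- The norm `‖Λ_{A,𝒢,z}(f)‖` of the adjointable operator
`Λ_{A,𝒢,z}(f) : ℓ²(𝒢(z,x), A_z) → ℓ²(𝒢(z,y), A_z)`, computed as the operator norm on the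
dense subspace of finitely supported vectors. -/
noncomputable def opNorm {x y : 𝒢} (f : A.Conv x y) (z : 𝒢) : ℝ :=
  sSup {r : ℝ | ∃ ξ : A.PreL2 z x, A.preNorm ξ ≤ 1 ∧ r = A.preNorm (A.lam f ξ)}

/-- The reduced norm `‖f‖_r = ‖Λ_{A,𝒢,z}(f)‖` of `f ∈ A𝒢(x,y)`: it is independent of the
choice of `z` with `𝒢(z,x) ≠ ∅`, so that taking the supremum over all `z` (the value being
`0` for the remaining `z`) gives a canonical description. -/
noncomputable def redNorm {x y : 𝒢} (f : A.Conv x y) : ℝ :=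
  ⨆ z : 𝒢, A.opNorm f z

end GCStarAlg

/-- The `ℋ`-C*-algebra obtained from a `𝒢`-C*-algebra by precomposition with a groupoid
morphism `φ : ℋ → 𝒢`. -/
@[simps] def GCStarAlg.restrict {ℋ 𝒢 : Type u} [Groupoid ℋ] [Groupoid 𝒢]
    (A : GCStarAlg 𝒢) (φ : ℋ ⥤ 𝒢) : GCStarAlg ℋ where
  fiber x := A.fiber (φ.obj x)
  act g := A.act (φ.map g)
  act_id x := by show A.act (φ.map (𝟙 x)) = _; rw [φ.map_id, A.act_id]
  act_comp g h := by show A.act (φ.map (g ≫ h)) = _; rw [φ.map_comp, A.act_comp]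

/-- The natural *-functor `id_A φ : Aℋ → A𝒢`, given by `x ↦ φ(x)` on objects and
`a u_g ↦ a u_{φ(g)}` on morphisms. -/
noncomputable def GCStarAlg.mapFaithful {ℋ 𝒢 : Type u} [Groupoid ℋ] [Groupoid 𝒢]
    (A : GCStarAlg 𝒢) (φ : ℋ ⥤ 𝒢) {x y : ℋ} (f : (A.restrict φ).Conv x y) :
    A.Conv (φ.obj x) (φ.obj y) :=
  Finsupp.mapDomain (fun g => φ.map g) f



/-! ### Auxiliary machinery for the proof -/

section AuxCStar
open Unitization Finset

lemma real_opt {x p q : ℝ} (hx : 0 ≤ x) (hp : 0 ≤ p) (hq : 0 ≤ q)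
    (h : ∀ t : ℝ, 0 < t → 2*t*x ≤ t^2*p + q) : x^2 ≤ p*q := by
  rcases eq_or_lt_of_le hx with hx0 | hx0
  · nlinarith
  rcases eq_or_lt_of_le hp with hp0 | hp0
  · exfalso
    have h1 := h (q/x + 1) (by positivity)
    have h2 : q/x*x = q := div_mul_cancel₀ q hx0.ne'
    nlinarith
  · have h1 := h (x/p) (by positivity)
    have hpne : p ≠ 0 := hp0.ne'
    have hxt : x = (x/p)*p := by field_simp
    have h3 : (x/p)^2*p ≤ q := by nlinarith
    calc x^2 = ((x/p)^2*p)*p := by field_simp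
    _ ≤ q*p := mul_le_mul_of_nonneg_right h3 hp
    _ = p*q := mul_comm _ _

section CStarIneq

variable {B : Type*} [NonUnitalCStarAlgebra B] {ι : Type*}

local notation "U" => Unitization ℂ B

lemma inr_finsum (s : Finset ι) (c : ι → B) :
    ((∑ i ∈ s, c i : B) : U) = ∑ i ∈ s, (c i : U) :=
  map_sum (inrNonUnitalStarAlgHom ℂ B) c s

/-- Norm bound: `‖∑ star cᵢ * cᵢ‖ ≤ ∑ ‖cᵢ‖²`. -/
lemma cstar_norm_sum_sq_le (s : Finset ι) (c : ι → B) :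
    ‖∑ i ∈ s, star (c i) * c i‖ ≤ ∑ i ∈ s, ‖c i‖^2 := by
  refine (norm_sum_le _ _).trans ?_
  refine Finset.sum_le_sum fun i _ => ?_
  rw [CStarRing.norm_star_mul_self, sq]

/-- Cauchy–Schwarz for finite sums in a non-unital C*-algebra. -/
lemma cstar_cauchy_schwarz (s : Finset ι) (c d : ι → B) :
    ‖∑ i ∈ s, star (c i) * d i‖^2 ≤ ‖∑ i ∈ s, star (c i) * c i‖ * ‖∑ i ∈ s, star (d i) * d i‖ := by
  letI : PartialOrder U := CStarAlgebra.spectralOrder _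
  haveI : StarOrderedRing U := CStarAlgebra.spectralOrderedRing _
  set x : B := ∑ i ∈ s, star (c i) * d i with hx
  set p : B := ∑ i ∈ s, star (c i) * c i with hp
  set q : B := ∑ i ∈ s, star (d i) * d i with hq
  have hpU : ((p : U)) = ∑ i ∈ s, star ((c i : U)) * (c i : U) := by
    simp [hp, inr_finsum, Unitization.inr_mul, Unitization.inr_star]
  have hqU : ((q : U)) = ∑ i ∈ s, star ((d i : U)) * (d i : U) := by
    simp [hq, inr_finsum, Unitization.inr_mul, Unitization.inr_star]
  have hxU : ((x : U)) = ∑ i ∈ s, star ((c i : U)) * (d i : U) := by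
    simp [hx, inr_finsum, Unitization.inr_mul, Unitization.inr_star]
  have hpsa : IsSelfAdjoint (p : U) := by
    have : star p = p := by simp [hp, star_sum, star_mul]
    rw [IsSelfAdjoint, ← Unitization.inr_star, this]
  have key : ∀ t : ℝ, 0 < t → 2*t*(‖x‖^2) ≤ t^2*(‖p‖*‖x‖^2) + ‖q‖ := by
    intro t ht
    set X : U := (x : U) with hX
    set Y : U := t • (x : U) with hY
    have h0 : (0 : U) ≤ ∑ i ∈ s, star ((c i : U) * Y - d i) * ((c i : U) * Y - (d i : U)) :=
      Finset.sum_nonneg fun i _ => star_mul_self_nonneg _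
    have hexp : ∑ i ∈ s, star ((c i : U) * Y - d i) * ((c i : U) * Y - (d i : U))
        = (star Y * (p : U) * Y + (q : U)) - (star Y * X + star X * Y) := by
      have e1 : ∀ i, star ((c i : U) * Y - d i) * ((c i : U) * Y - (d i : U))
          = star Y * (star (c i : U) * (c i : U)) * Y
            - star Y * (star (c i : U) * (d i : U))
            - star (star (c i : U) * (d i : U)) * Y
            + star (d i : U) * (d i : U) := by
        intro i
        simp only [star_sub, star_mul, star_star, sub_mul, mul_sub, mul_assoc]
        abel
      rw [Finset.sum_congr rfl fun i _ => e1 i]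
      simp only [Finset.sum_add_distrib, Finset.sum_sub_distrib, ← Finset.mul_sum,
        ← Finset.sum_mul, ← hpU, ← hqU, ← hxU]
      have h7 : ∑ i ∈ s, star (star ((c i : U)) * (d i : U)) = star X := by
        rw [hxU, star_sum]
      rw [h7]
      abel
    have h2 : star Y * X + star X * Y ≤ star Y * (p : U) * Y + (q : U) := by
      rw [← sub_nonneg]; rw [hexp] at h0; exact h0
    have h3 : star Y * (p : U) * Y ≤ ‖p‖ • (star Y * Y) := by
      have := CStarAlgebra.star_left_conjugate_le_norm_smul (a := Y) (b := (p : U)) hpsa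
      rwa [Unitization.norm_inr] at this
    have h4 : star Y * X + star X * Y ≤ ‖p‖ • (star Y * Y) + (q : U) :=
      h2.trans (add_le_add_left h3 _)
    have hrr : Real.sqrt (2*t) * Real.sqrt (2*t) = 2*t :=
      Real.mul_self_sqrt (by positivity)
    have hs1 : star ((Real.sqrt (2*t)) • X) * ((Real.sqrt (2*t)) • X) = (2*t) • (star X * X) := by
      rw [star_smul, star_trivial (Real.sqrt (2*t)), smul_mul_assoc, mul_smul_comm, smul_smul, hrr]
    have hs2 : star Y * X + star X * Y = (2*t) • (star X * X) := by
      have hYX : Y = t • X := by rw [hY, hX]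
      rw [hYX, star_smul, star_trivial t, smul_mul_assoc, mul_smul_comm, ← add_smul]
      congr 1
      ring
    have hSeq : star Y * X + star X * Y = star ((Real.sqrt (2*t)) • X) * ((Real.sqrt (2*t)) • X) :=
      hs2.trans hs1.symm
    have h5 : (0 : U) ≤ star Y * X + star X * Y := by
      rw [hSeq]; exact star_mul_self_nonneg _
    have h6 := CStarAlgebra.norm_le_norm_of_nonneg_of_le h5 h4
    have hnX : ‖X‖ = ‖x‖ := Unitization.norm_inr x
    have hL : ‖star Y * X + star X * Y‖ = 2*t*‖x‖^2 := by
      rw [hSeq, CStarRing.norm_star_mul_self, norm_smul,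
        Real.norm_of_nonneg (Real.sqrt_nonneg _), hnX]
      linear_combination (‖x‖^2) * hrr
    have hR : ‖(‖p‖ • (star Y * Y) + (q : U))‖ ≤ t^2*(‖p‖*‖x‖^2) + ‖q‖ := by
      refine (norm_add_le _ _).trans ?_
      rw [Unitization.norm_inr, norm_smul, Real.norm_of_nonneg (norm_nonneg p),
        CStarRing.norm_star_mul_self, hY, norm_smul, Real.norm_of_nonneg ht.le, hnX]
      nlinarith [norm_nonneg p, norm_nonneg x, norm_nonneg q]
    rw [hL] at h6
    exact h6.trans hR
  have main := real_opt (by positivity) (by positivity) (norm_nonneg q) key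
  rcases eq_or_lt_of_le (norm_nonneg x) with hx0 | hx0
  · rw [← hx0]
    simpa using mul_nonneg (norm_nonneg p) (norm_nonneg q)
  · have hc : (0:ℝ) < ‖x‖^2 := by positivity
    refine le_of_mul_le_mul_right ?_ hc
    calc ‖x‖^2 * ‖x‖^2 = (‖x‖^2)^2 := by ring
    _ ≤ (‖p‖*‖x‖^2)*‖q‖ := main
    _ = ‖p‖*‖q‖*‖x‖^2 := by ring

end CStarIneq

section CStarIneq2

variable {B : Type*} [NonUnitalCStarAlgebra B] {ι : Type*}

local notation "U" => Unitization ℂ B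

lemma nonneg_algebraMap_unitization (t : ℝ) (ht : 0 ≤ t) :
    letI : PartialOrder U := CStarAlgebra.spectralOrder _
    0 ≤ algebraMap ℝ U t := by
  letI : PartialOrder U := CStarAlgebra.spectralOrder _
  haveI : StarOrderedRing U := CStarAlgebra.spectralOrderedRing _
  have : algebraMap ℝ U t = star ((Real.sqrt t) • (1:U)) * ((Real.sqrt t) • (1:U)) := by
    rw [star_smul, star_trivial (Real.sqrt t), star_one, smul_mul_assoc, mul_smul_comm,
      one_mul, smul_smul, Real.mul_self_sqrt ht, Algebra.algebraMap_eq_smul_one]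
  rw [this]
  exact star_mul_self_nonneg _

lemma cstar_conj_bound (s : Finset ι) (c d : ι → B) (K : ℝ) (hK : 0 ≤ K)
    (h : ∀ i ∈ s, ∃ e : B, c i = e * d i ∧ ‖e‖ ≤ K) :
    ‖∑ i ∈ s, star (c i) * c i‖ ≤ K^2 * ‖∑ i ∈ s, star (d i) * d i‖ := by
  letI : PartialOrder U := CStarAlgebra.spectralOrder _
  haveI : StarOrderedRing U := CStarAlgebra.spectralOrderedRing _
  have key : ∀ i ∈ s, star ((c i : U)) * (c i : U) ≤ (K^2) • (star ((d i : U)) * (d i : U)) := by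
    intro i hi
    obtain ⟨e, hc, he⟩ := h i hi
    have hc' : ((c i : U)) = (e : U) * (d i : U) := by
      rw [hc, Unitization.inr_mul]
    have step1 : star ((c i : U)) * (c i : U)
        = star ((d i : U)) * (star (e : U) * (e : U)) * (d i : U) := by
      rw [hc', star_mul]
      noncomm_ring
    have sa : IsSelfAdjoint (star (e : U) * (e : U)) := IsSelfAdjoint.star_mul_self _
    have step2 : star (e : U) * (e : U) ≤ algebraMap ℝ U (K^2) := by
      refine (sa.le_algebraMap_norm_self).trans ?_
      have hnorm : ‖star (e : U) * (e : U)‖ ≤ K^2 := by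
        rw [CStarRing.norm_star_mul_self, Unitization.norm_inr]
        calc ‖e‖ * ‖e‖ ≤ K * K := mul_le_mul he he (norm_nonneg _) hK
        _ = K^2 := (sq K).symm
      have : (0:U) ≤ algebraMap ℝ U (K^2) - algebraMap ℝ U ‖star (e : U) * (e : U)‖ := by
        rw [← map_sub]
        exact nonneg_algebraMap_unitization _ (by linarith)
      exact sub_nonneg.mp this
    calc star ((c i : U)) * (c i : U)
        = star ((d i : U)) * (star (e : U) * (e : U)) * (d i : U) := step1
      _ ≤ star ((d i : U)) * (algebraMap ℝ U (K^2)) * (d i : U) :=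
          star_left_conjugate_le_conjugate step2 _
      _ = (K^2) • (star ((d i : U)) * (d i : U)) := by
          simp [Algebra.algebraMap_eq_smul_one, mul_smul_comm, smul_mul_assoc]
  have hsum : ∑ i ∈ s, star ((c i : U)) * (c i : U)
      ≤ (K^2) • ∑ i ∈ s, star ((d i : U)) * (d i : U) := by
    rw [Finset.smul_sum]
    exact Finset.sum_le_sum key
  have h0 : (0:U) ≤ ∑ i ∈ s, star ((c i : U)) * (c i : U) :=
    Finset.sum_nonneg fun i _ => star_mul_self_nonneg _
  have h6 := CStarAlgebra.norm_le_norm_of_nonneg_of_le h0 hsum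
  have hcs : ((∑ i ∈ s, star (c i) * c i : B) : U) = ∑ i ∈ s, star ((c i : U)) * (c i : U) := by
    simp [inr_finsum, Unitization.inr_mul, Unitization.inr_star]
  have hds : ((∑ i ∈ s, star (d i) * d i : B) : U) = ∑ i ∈ s, star ((d i : U)) * (d i : U) := by
    simp [inr_finsum, Unitization.inr_mul, Unitization.inr_star]
  rw [← hcs, ← hds, Unitization.norm_inr] at h6
  rwa [norm_smul, Real.norm_of_nonneg (by positivity : (0:ℝ) ≤ K^2), Unitization.norm_inr] at h6

end CStarIneq2

end AuxCStar

section FinsuppCStar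
open scoped Classical

open Finsupp

variable {ι κ : Type*} {B C D : Type*}
variable [NonUnitalCStarAlgebra B] [NonUnitalCStarAlgebra C] [NonUnitalCStarAlgebra D]

/-- The `B`-valued inner product of two finitely supported functions. -/
noncomputable def fInner (ξ ζ : ι →₀ B) : B := ∑ h ∈ ξ.support, star (ξ h) * ζ h

lemma fInner_eq_sum (ξ ζ : ι →₀ B) (s : Finset ι) (hs : ξ.support ⊆ s) :
    fInner ξ ζ = ∑ h ∈ s, star (ξ h) * ζ h := by
  refine Finset.sum_subset hs fun h _ hh => ?_
  rw [Finsupp.notMem_support_iff.mp hh, star_zero, zero_mul]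

lemma fInner_eq_sum' (ξ ζ : ι →₀ B) (s : Finset ι) (hs : ξ.support ∩ ζ.support ⊆ s) :
    fInner ξ ζ = ∑ h ∈ s, star (ξ h) * ζ h := by
  rw [fInner_eq_sum ξ ζ (s ∪ ξ.support) Finset.subset_union_right]
  refine (Finset.sum_subset Finset.subset_union_left fun h hh hs' => ?_).symm
  rcases Finset.mem_union.mp hh with h1 | h1
  · exact absurd h1 hs'
  · have : h ∉ ζ.support := fun h2 => hs' (hs (Finset.mem_inter.mpr ⟨h1, h2⟩))
    rw [Finsupp.notMem_support_iff.mp this, mul_zero]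

lemma fInner_zero_left (ζ : ι →₀ B) : fInner 0 ζ = 0 := by simp [fInner]

lemma fInner_zero_right (ξ : ι →₀ B) : fInner ξ 0 = 0 := by simp [fInner]

lemma fInner_add_left (ξ₁ ξ₂ ζ : ι →₀ B) :
    fInner (ξ₁ + ξ₂) ζ = fInner ξ₁ ζ + fInner ξ₂ ζ := by
  rw [fInner_eq_sum (ξ₁ + ξ₂) ζ (ξ₁.support ∪ ξ₂.support) Finsupp.support_add,
    fInner_eq_sum ξ₁ ζ _ Finset.subset_union_left,
    fInner_eq_sum ξ₂ ζ _ Finset.subset_union_right, ← Finset.sum_add_distrib]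
  refine Finset.sum_congr rfl fun h _ => ?_
  rw [Finsupp.add_apply, star_add, add_mul]

lemma fInner_add_right (ξ ζ₁ ζ₂ : ι →₀ B) :
    fInner ξ (ζ₁ + ζ₂) = fInner ξ ζ₁ + fInner ξ ζ₂ := by
  simp only [fInner, Finsupp.add_apply, mul_add, Finset.sum_add_distrib]

lemma star_fInner (ξ ζ : ι →₀ B) : star (fInner ξ ζ) = fInner ζ ξ := by
  rw [fInner_eq_sum ξ ζ (ξ.support ∪ ζ.support) Finset.subset_union_left,
    fInner_eq_sum ζ ξ (ξ.support ∪ ζ.support) Finset.subset_union_right, star_sum]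
  refine Finset.sum_congr rfl fun h _ => ?_
  rw [star_mul, star_star]

lemma fInner_single_left (h : ι) (b : B) (ζ : ι →₀ B) :
    fInner (Finsupp.single h b) ζ = star b * ζ h := by
  rw [fInner_eq_sum _ ζ {h} Finsupp.support_single_subset, Finset.sum_singleton,
    Finsupp.single_eq_same]

lemma fInner_disjoint (ξ ζ : ι →₀ B) (hd : ∀ h, h ∈ ξ.support → h ∉ ζ.support) :
    fInner ξ ζ = 0 := by
  refine Finset.sum_eq_zero fun h hh => ?_
  rw [Finsupp.notMem_support_iff.mp (hd h hh), mul_zero]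

lemma norm_fInner_le (ξ ζ : ι →₀ B) :
    ‖fInner ξ ζ‖ ≤ Real.sqrt ‖fInner ξ ξ‖ * Real.sqrt ‖fInner ζ ζ‖ := by
  have h1 := cstar_cauchy_schwarz (ξ.support ∪ ζ.support) (fun h => ξ h) (fun h => ζ h)
  rw [← fInner_eq_sum ξ ζ _ Finset.subset_union_left,
    ← fInner_eq_sum ξ ξ _ Finset.subset_union_left,
    ← fInner_eq_sum ζ ζ _ Finset.subset_union_right] at h1
  have h2 : Real.sqrt (‖fInner ξ ζ‖^2) ≤ Real.sqrt (‖fInner ξ ξ‖ * ‖fInner ζ ζ‖) :=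
    Real.sqrt_le_sqrt h1
  rwa [Real.sqrt_sq (norm_nonneg _), Real.sqrt_mul (norm_nonneg _)] at h2

lemma norm_fInner_self_le (ξ : ι →₀ B) :
    ‖fInner ξ ξ‖ ≤ ∑ h ∈ ξ.support, ‖ξ h‖^2 :=
  cstar_norm_sum_sq_le ξ.support (fun h => ξ h)

/-- Transport of a finitely supported function along an injection `ψ` of the index sets and
a ⋆-isomorphism `w` of the coefficient algebras. -/
noncomputable def tmap (ψ : ι → κ) (w : B ≃⋆ₐ[ℂ] C) (ξ : ι →₀ B) : κ →₀ C :=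
  Finsupp.mapDomain ψ (ξ.mapRange w (map_zero w))

lemma tmap_single (ψ : ι → κ) (w : B ≃⋆ₐ[ℂ] C) (h : ι) (b : B) :
    tmap ψ w (Finsupp.single h b) = Finsupp.single (ψ h) (w b) := by
  rw [tmap, Finsupp.mapRange_single, Finsupp.mapDomain_single]

lemma tmap_zero (ψ : ι → κ) (w : B ≃⋆ₐ[ℂ] C) : tmap ψ w 0 = 0 := by
  simp [tmap]

lemma tmap_add (ψ : ι → κ) (w : B ≃⋆ₐ[ℂ] C) (ξ ζ : ι →₀ B) :
    tmap ψ w (ξ + ζ) = tmap ψ w ξ + tmap ψ w ζ := by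
  rw [tmap, Finsupp.mapRange_add (map_add w), Finsupp.mapDomain_add]; rfl

lemma tmap_apply (ψ : ι → κ) (hψ : Function.Injective ψ) (w : B ≃⋆ₐ[ℂ] C) (ξ : ι →₀ B) (i : ι) :
    tmap ψ w ξ (ψ i) = w (ξ i) := by
  rw [tmap, Finsupp.mapDomain_apply hψ, Finsupp.mapRange_apply]

lemma tmap_notin (ψ : ι → κ) (w : B ≃⋆ₐ[ℂ] C) (ξ : ι →₀ B) (k : κ) (hk : k ∉ Set.range ψ) :
    tmap ψ w ξ k = 0 :=
  Finsupp.mapDomain_notin_range _ k hk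

lemma tmap_support (ψ : ι → κ) (w : B ≃⋆ₐ[ℂ] C) (ξ : ι →₀ B) :
    (tmap ψ w ξ).support ⊆ ξ.support.image ψ := by
  classical
  refine Finsupp.mapDomain_support.trans (Finset.image_subset_image ?_)
  exact Finsupp.support_mapRange

lemma fInner_tmap (ψ : ι → κ) (hψ : Function.Injective ψ) (w : B ≃⋆ₐ[ℂ] C) (ξ ζ : ι →₀ B) :
    fInner (tmap ψ w ξ) (tmap ψ w ζ) = w (fInner ξ ζ) := by
  classical
  rw [fInner_eq_sum _ _ (ξ.support.image ψ) (tmap_support ψ w ξ),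
    Finset.sum_image (fun a _ b _ hab => hψ hab)]
  rw [fInner, map_sum]
  refine Finset.sum_congr rfl fun h _ => ?_
  rw [tmap_apply ψ hψ w ξ, tmap_apply ψ hψ w ζ, map_mul, map_star]

lemma norm_starAlgEquiv (w : B ≃⋆ₐ[ℂ] C) (b : B) : ‖w b‖ = ‖b‖ :=
  (StarAlgEquiv.isometry w).norm_map_of_map_zero (map_zero w) b

end FinsuppCStar
namespace GCStarAlg

open CategoryTheory Finsupp

section Algebra

variable {𝒢 : Type u} [Groupoid 𝒢] (A : GCStarAlg 𝒢)

lemma act_act {x y z : 𝒢} (g : x ⟶ y) (h : y ⟶ z) (a : A.fiber x) :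
    A.act h (A.act g a) = A.act (g ≫ h) a := by rw [A.act_comp]; rfl

lemma act_id_apply (x : 𝒢) (a : A.fiber x) : A.act (𝟙 x) a = a := by rw [A.act_id]; rfl

lemma ginv_comp {x y z : 𝒢} (f : x ⟶ y) (g : y ⟶ z) :
    Groupoid.inv (f ≫ g) = Groupoid.inv g ≫ Groupoid.inv f := by
  simp [Groupoid.inv_eq_inv]

lemma ginv_ginv {x y : 𝒢} (f : x ⟶ y) : Groupoid.inv (Groupoid.inv f) = f := by
  simp [Groupoid.inv_eq_inv]

/-! ### Values on single generators -/

lemma convMul_single_single {x y z : 𝒢} (g₂ : y ⟶ z) (a₂ : A.fiber z) (g₁ : x ⟶ y)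
    (a₁ : A.fiber y) :
    A.convMul (Finsupp.single g₂ a₂) (Finsupp.single g₁ a₁)
      = Finsupp.single (g₁ ≫ g₂) (a₂ * A.act g₂ a₁) := by
  rw [convMul, Finsupp.sum_single_index, Finsupp.sum_single_index]
  · simp
  · rw [Finsupp.sum_single_index] <;> simp

lemma convStar_single {x y : 𝒢} (g : x ⟶ y) (a : A.fiber y) :
    A.convStar (Finsupp.single g a)
      = Finsupp.single (Groupoid.inv g) (star (A.act (Groupoid.inv g) a)) := by
  rw [convStar, Finsupp.sum_single_index]
  simp

lemma lam_single_single {x y z : 𝒢} (g : x ⟶ y) (a : A.fiber y) (h : z ⟶ x) (b : A.fiber z) :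
    A.lam (Finsupp.single g a) (Finsupp.single h b)
      = Finsupp.single (h ≫ g) (A.act (Groupoid.inv (h ≫ g)) a * b) := by
  rw [lam, Finsupp.sum_single_index, Finsupp.sum_single_index]
  · simp
  · rw [Finsupp.sum_single_index] <;> simp

/-! ### Additivity -/

lemma convMul_zero_left {x y z : 𝒢} (f₁ : A.Conv x y) : A.convMul (0 : A.Conv y z) f₁ = 0 := by
  rw [convMul]; exact Finsupp.sum_zero_index

lemma convMul_zero_right {x y z : 𝒢} (f₂ : A.Conv y z) : A.convMul f₂ (0 : A.Conv x y) = 0 := by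
  simp [convMul]

lemma convMul_add_left {x y z : 𝒢} (f₂ f₂' : A.Conv y z) (f₁ : A.Conv x y) :
    A.convMul (f₂ + f₂') f₁ = A.convMul f₂ f₁ + A.convMul f₂' f₁ := by
  refine Finsupp.sum_add_index' (fun g => ?_) (fun g b₁ b₂ => ?_)
  · refine (Finsupp.sum_congr (g2 := fun _ _ => 0) fun h _ => ?_).trans Finset.sum_const_zero
    simp
  · rw [← Finsupp.sum_add]
    refine Finsupp.sum_congr fun h _ => ?_
    rw [← Finsupp.single_add, add_mul]

lemma convMul_add_right {x y z : 𝒢} (f₂ : A.Conv y z) (f₁ f₁' : A.Conv x y) :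
    A.convMul f₂ (f₁ + f₁') = A.convMul f₂ f₁ + A.convMul f₂ f₁' := by
  rw [convMul, convMul, convMul, ← Finsupp.sum_add]
  refine Finsupp.sum_congr fun g a => ?_
  refine Finsupp.sum_add_index' (fun h => ?_) (fun h b₁ b₂ => ?_)
  · simp
  · rw [← Finsupp.single_add, map_add, mul_add]

lemma convStar_zero {x y : 𝒢} : A.convStar (0 : A.Conv x y) = 0 := by
  rw [convStar]; exact Finsupp.sum_zero_index

lemma convStar_add {x y : 𝒢} (f f' : A.Conv x y) :
    A.convStar (f + f') = A.convStar f + A.convStar f' := by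
  refine Finsupp.sum_add_index' (fun g => ?_) (fun g b₁ b₂ => ?_)
  · simp
  · rw [← Finsupp.single_add, map_add, star_add]

lemma lam_zero_left {x y z : 𝒢} (ξ : A.PreL2 z x) : A.lam (0 : A.Conv x y) ξ = 0 := by
  rw [lam]; exact Finsupp.sum_zero_index

lemma lam_zero_right {x y z : 𝒢} (f : A.Conv x y) : A.lam f (0 : A.PreL2 z x) = 0 := by
  simp [lam]

lemma lam_add_left {x y z : 𝒢} (f f' : A.Conv x y) (ξ : A.PreL2 z x) :
    A.lam (f + f') ξ = A.lam f ξ + A.lam f' ξ := by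
  refine Finsupp.sum_add_index' (fun g => ?_) (fun g b₁ b₂ => ?_)
  · refine (Finsupp.sum_congr (g2 := fun _ _ => 0) fun h _ => ?_).trans Finset.sum_const_zero
    simp
  · rw [← Finsupp.sum_add]
    refine Finsupp.sum_congr fun h b => ?_
    rw [map_add, add_mul, Finsupp.single_add]

lemma lam_add_right {x y z : 𝒢} (f : A.Conv x y) (ξ ξ' : A.PreL2 z x) :
    A.lam f (ξ + ξ') = A.lam f ξ + A.lam f ξ' := by
  rw [lam, lam, lam, ← Finsupp.sum_add]
  refine Finsupp.sum_congr fun g a => ?_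
  refine Finsupp.sum_add_index' (fun h => ?_) (fun h b₁ b₂ => ?_)
  · simp
  · rw [mul_add, Finsupp.single_add]

/-! ### Composition, star, adjoint -/

lemma lam_lam {x y w z : 𝒢} (f₂ : A.Conv y w) (f₁ : A.Conv x y) (ξ : A.PreL2 z x) :
    A.lam (A.convMul f₂ f₁) ξ = A.lam f₂ (A.lam f₁ ξ) := by
  induction f₂ using Finsupp.induction_linear with
  | zero => rw [convMul_zero_left, lam_zero_left, lam_zero_left]
  | add p q hp hq => rw [convMul_add_left, lam_add_left, lam_add_left, hp, hq]
  | single g₂ a₂ =>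
    induction f₁ using Finsupp.induction_linear with
    | zero => rw [convMul_zero_right, lam_zero_left, lam_zero_left, lam_zero_right]
    | add p q hp hq => rw [convMul_add_right, lam_add_left, lam_add_left, lam_add_right, hp, hq]
    | single g₁ a₁ =>
      induction ξ using Finsupp.induction_linear with
      | zero => rw [lam_zero_right, lam_zero_right, lam_zero_right]
      | add p q hp hq => rw [lam_add_right, lam_add_right, hp, hq, lam_add_right]
      | single h b =>
        rw [convMul_single_single, lam_single_single, lam_single_single, lam_single_single,
          ← Category.assoc]
        congr 1
        rw [map_mul, mul_assoc]
        congr 2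
        rw [act_act]
        have harr : g₂ ≫ Groupoid.inv ((h ≫ g₁) ≫ g₂) = Groupoid.inv (h ≫ g₁) := by
          rw [ginv_comp, ← Category.assoc, Groupoid.comp_inv, Category.id_comp]
        rw [harr]

lemma convStar_convStar {x y : 𝒢} (f : A.Conv x y) : A.convStar (A.convStar f) = f := by
  induction f using Finsupp.induction_linear with
  | zero => rw [convStar_zero, convStar_zero]
  | add p q hp hq => rw [convStar_add, convStar_add, hp, hq]
  | single g a =>
    rw [convStar_single, convStar_single, ginv_ginv]
    congr 1
    rw [map_star, star_star, act_act, Groupoid.inv_comp, act_id_apply]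

lemma convStar_convMul {x y z : 𝒢} (f₂ : A.Conv y z) (f₁ : A.Conv x y) :
    A.convStar (A.convMul f₂ f₁) = A.convMul (A.convStar f₁) (A.convStar f₂) := by
  induction f₂ using Finsupp.induction_linear with
  | zero => rw [convMul_zero_left, convStar_zero, convStar_zero, convMul_zero_right]
  | add p q hp hq =>
    rw [convMul_add_left, convStar_add, convStar_add, hp, hq, convMul_add_right]
  | single g₂ a₂ =>
    induction f₁ using Finsupp.induction_linear with
    | zero => rw [convMul_zero_right, convStar_zero, convStar_zero, convMul_zero_left]
    | add p q hp hq =>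
      rw [convMul_add_right, convStar_add, convStar_add, hp, hq, convMul_add_left]
    | single g₁ a₁ =>
      rw [convMul_single_single, convStar_single, convStar_single, convStar_single,
        convMul_single_single, ginv_comp]
      congr 1
      rw [map_mul, star_mul, map_star]
      have h1 : (A.act (Groupoid.inv g₂ ≫ Groupoid.inv g₁)) ((A.act g₂) a₁)
          = (A.act (Groupoid.inv g₁)) a₁ := by
        rw [act_act, ← Category.assoc, Groupoid.comp_inv, Category.id_comp]
      have h2 : (A.act (Groupoid.inv g₂ ≫ Groupoid.inv g₁)) a₂
          = (A.act (Groupoid.inv g₁)) ((A.act (Groupoid.inv g₂)) a₂) :=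
        (A.act_act _ _ _).symm
      rw [h1, h2]

lemma fInner_lam {x y z : 𝒢} (f : A.Conv x y) (ξ : A.PreL2 z x) (ζ : A.PreL2 z y) :
    fInner (A.lam f ξ) ζ = fInner ξ (A.lam (A.convStar f) ζ) := by
  induction f using Finsupp.induction_linear with
  | zero => rw [lam_zero_left, convStar_zero, lam_zero_left, fInner_zero_left, fInner_zero_right]
  | add p q hp hq =>
    rw [lam_add_left, convStar_add, lam_add_left, fInner_add_left, fInner_add_right, hp, hq]
  | single g a =>
    induction ξ using Finsupp.induction_linear with
    | zero => rw [lam_zero_right, fInner_zero_left, fInner_zero_left]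
    | add p q hp hq => rw [lam_add_right, fInner_add_left, fInner_add_left, hp, hq]
    | single h b =>
      induction ζ using Finsupp.induction_linear with
      | zero => rw [lam_zero_right, fInner_zero_right, fInner_zero_right]
      | add p q hp hq => rw [lam_add_right, fInner_add_right, fInner_add_right, hp, hq]
      | single k c =>
        rw [lam_single_single, convStar_single, lam_single_single, fInner_single_left,
          fInner_single_left]
        by_cases hk : h ≫ g = k
        · have hki : k ≫ Groupoid.inv g = h := by
            rw [← hk, Category.assoc, Groupoid.comp_inv, Category.comp_id]
          rw [hk, hki, Finsupp.single_eq_same, Finsupp.single_eq_same,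
            map_star (A.act (Groupoid.inv h))]
          have h3 : A.act (Groupoid.inv h) ((A.act (Groupoid.inv g)) a)
              = A.act (Groupoid.inv k) a := by
            rw [act_act, ← ginv_comp, hk]
          rw [h3, star_mul, mul_assoc]
        · have hki : k ≫ Groupoid.inv g ≠ h := by
            intro hc
            exact hk (by rw [← hc, Category.assoc, Groupoid.inv_comp, Category.comp_id])
          rw [Finsupp.single_eq_of_ne' (Ne.symm hk), Finsupp.single_eq_of_ne' hki,
            mul_zero, mul_zero]

end Algebra

end GCStarAlg
section TwMap

open Finsupp
open scoped Classical

variable {ι κ : Type*} {B C : Type*} [NonUnitalCStarAlgebra B] [NonUnitalCStarAlgebra C]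

/-- Transport of finitely supported functions along `ψ` with index-dependent coefficient
maps. -/
noncomputable def twmap (ψ : ι → κ) (c : ι → B → C) (ξ : ι →₀ B) : κ →₀ C :=
  ξ.sum fun i b => Finsupp.single (ψ i) (c i b)

lemma twmap_support (ψ : ι → κ) (c : ι → B → C) (ξ : ι →₀ B) :
    (twmap ψ c ξ).support ⊆ ξ.support.image ψ := by
  refine Finsupp.support_sum.trans ?_
  intro k hk
  rw [Finset.mem_biUnion] at hk
  obtain ⟨i, hi, hk⟩ := hk
  have := Finsupp.support_single_subset hk
  rw [Finset.mem_singleton] at this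
  rw [this]
  exact Finset.mem_image_of_mem ψ hi

lemma twmap_apply (ψ : ι → κ) (hψ : Function.Injective ψ) (c : ι → B → C)
    (hc : ∀ i, c i 0 = 0) (ξ : ι →₀ B) (i : ι) :
    twmap ψ c ξ (ψ i) = c i (ξ i) := by
  rw [twmap, Finsupp.sum, Finsupp.finset_sum_apply]
  have hcong : ∀ h ∈ ξ.support,
      (Finsupp.single (ψ h) (c h (ξ h))) (ψ i) = if h = i then c h (ξ h) else 0 := by
    intro h _
    rw [Finsupp.single_apply]
    exact if_congr ⟨fun e => hψ e, fun e => by rw [e]⟩ rfl rfl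
  rw [Finset.sum_congr rfl hcong, Finset.sum_ite_eq' ξ.support i _]
  by_cases hi : i ∈ ξ.support
  · rw [if_pos hi]
  · rw [if_neg hi, Finsupp.notMem_support_iff.mp hi, hc]

lemma fInner_twmap_self (ψ : ι → κ) (hψ : Function.Injective ψ) (c : ι → B → C)
    (hc : ∀ i, c i 0 = 0) (ξ : ι →₀ B) :
    fInner (twmap ψ c ξ) (twmap ψ c ξ) = ∑ h ∈ ξ.support, star (c h (ξ h)) * (c h (ξ h)) := by
  rw [fInner_eq_sum _ _ (ξ.support.image ψ) (twmap_support _ _ _),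
    Finset.sum_image (fun a _ b _ hab => hψ hab)]
  exact Finset.sum_congr rfl fun h _ => by rw [twmap_apply ψ hψ c hc]

end TwMap

namespace GCStarAlg

open CategoryTheory Finsupp

section Norms

variable {𝒢 : Type u} [Groupoid 𝒢] (A : GCStarAlg 𝒢)

lemma comp_right_injective {x y z : 𝒢} (g : x ⟶ y) :
    Function.Injective (fun h : z ⟶ x => h ≫ g) := by
  intro h h' e
  have := congrArg (· ≫ Groupoid.inv g) e
  simpa [Category.assoc, Groupoid.comp_inv] using this

lemma comp_left_injective {x y z : 𝒢} (u : z ⟶ x) :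
    Function.Injective (fun h : x ⟶ y => u ≫ h) := by
  intro h h' e
  have := congrArg (Groupoid.inv u ≫ ·) e
  simpa [← Category.assoc, Groupoid.inv_comp] using this

lemma preNorm_eq {z x : 𝒢} (ξ : A.PreL2 z x) : A.preNorm ξ = Real.sqrt ‖fInner ξ ξ‖ := rfl

lemma preNorm_nonneg {z x : 𝒢} (ξ : A.PreL2 z x) : 0 ≤ A.preNorm ξ := Real.sqrt_nonneg _

lemma preNorm_sq {z x : 𝒢} (ξ : A.PreL2 z x) : (A.preNorm ξ)^2 = ‖fInner ξ ξ‖ := by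
  rw [preNorm_eq, Real.sq_sqrt (norm_nonneg _)]

lemma preNorm_zero {z x : 𝒢} : A.preNorm (0 : A.PreL2 z x) = 0 := by
  rw [preNorm_eq, fInner_zero_left, norm_zero, Real.sqrt_zero]

lemma norm_fInner_le_preNorm {z x : 𝒢} (ξ ζ : A.PreL2 z x) :
    ‖fInner ξ ζ‖ ≤ A.preNorm ξ * A.preNorm ζ := by
  rw [preNorm_eq, preNorm_eq]
  exact norm_fInner_le ξ ζ

lemma preNorm_add_le {z x : 𝒢} (ξ ζ : A.PreL2 z x) :
    A.preNorm (ξ + ζ) ≤ A.preNorm ξ + A.preNorm ζ := by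
  have h1 : ‖fInner (ξ + ζ) (ξ + ζ)‖ ≤ (A.preNorm ξ + A.preNorm ζ)^2 := by
    rw [fInner_add_left, fInner_add_right, fInner_add_right]
    have e1 := A.norm_fInner_le_preNorm ξ ξ
    have e2 := A.norm_fInner_le_preNorm ξ ζ
    have e3 : ‖fInner ζ ξ‖ ≤ A.preNorm ξ * A.preNorm ζ := by
      rw [← star_fInner ξ ζ, norm_star]
      exact e2
    have e4 := A.norm_fInner_le_preNorm ζ ζ
    calc ‖fInner ξ ξ + fInner ξ ζ + (fInner ζ ξ + fInner ζ ζ)‖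
        ≤ ‖fInner ξ ξ‖ + ‖fInner ξ ζ‖ + (‖fInner ζ ξ‖ + ‖fInner ζ ζ‖) := by
          refine (norm_add_le _ _).trans ?_
          gcongr <;> exact norm_add_le _ _
      _ ≤ (A.preNorm ξ + A.preNorm ζ)^2 := by nlinarith [A.preNorm_nonneg ξ, A.preNorm_nonneg ζ]
  have h2 : A.preNorm (ξ + ζ) = Real.sqrt ‖fInner (ξ + ζ) (ξ + ζ)‖ := rfl
  rw [h2]
  refine (Real.sqrt_le_sqrt h1).trans ?_
  rw [Real.sqrt_sq (add_nonneg (A.preNorm_nonneg ξ) (A.preNorm_nonneg ζ))]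

lemma preNorm_smul {z x : 𝒢} (t : ℝ) (ξ : A.PreL2 z x) :
    A.preNorm (t • ξ) = |t| * A.preNorm ξ := by
  have h1 : fInner (t • ξ) (t • ξ) = (t * t) • fInner ξ ξ := by
    rw [fInner_eq_sum (t • ξ) (t • ξ) ξ.support Finsupp.support_smul, fInner, Finset.smul_sum]
    refine Finset.sum_congr rfl fun h _ => ?_
    rw [Finsupp.smul_apply, star_smul, star_trivial t, smul_mul_assoc, mul_smul_comm, smul_smul]
  rw [preNorm_eq, preNorm_eq, h1, norm_smul, Real.norm_eq_abs, abs_mul_self t,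
    ← Real.sqrt_mul_self_eq_abs t, ← Real.sqrt_mul (mul_self_nonneg t)]

lemma lam_smul {x y z : 𝒢} (f : A.Conv x y) (t : ℝ) (ξ : A.PreL2 z x) :
    A.lam f (t • ξ) = t • A.lam f ξ := by
  induction f using Finsupp.induction_linear with
  | zero => rw [lam_zero_left, lam_zero_left, smul_zero]
  | add p q hp hq => rw [lam_add_left, lam_add_left, hp, hq, smul_add]
  | single g a =>
    induction ξ using Finsupp.induction_linear with
    | zero => rw [smul_zero, lam_zero_right, smul_zero]
    | add p q hp hq => rw [smul_add, lam_add_right, lam_add_right, hp, hq, smul_add]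
    | single h b =>
      rw [Finsupp.smul_single, lam_single_single, lam_single_single, mul_smul_comm,
        Finsupp.smul_single]

lemma lam_single_eq_twmap {x y z : 𝒢} (g : x ⟶ y) (a : A.fiber y) (ξ : A.PreL2 z x) :
    A.lam (Finsupp.single g a) ξ
      = twmap (fun h : z ⟶ x => h ≫ g) (fun h b => A.act (Groupoid.inv (h ≫ g)) a * b) ξ := by
  rw [lam, Finsupp.sum_single_index]
  · rfl
  · refine (Finsupp.sum_congr (g2 := fun _ _ => 0) fun h _ => ?_).trans Finset.sum_const_zero
    simp

lemma preNorm_lam_single_le {x y z : 𝒢} (g : x ⟶ y) (a : A.fiber y) (ξ : A.PreL2 z x) :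
    A.preNorm (A.lam (Finsupp.single g a) ξ) ≤ ‖a‖ * A.preNorm ξ := by
  rw [lam_single_eq_twmap, preNorm_eq, preNorm_eq]
  rw [fInner_twmap_self _ (comp_right_injective g) _ (fun h => by rw [mul_zero]) ξ]
  have hb : ‖∑ h ∈ ξ.support, star (A.act (Groupoid.inv (h ≫ g)) a * ξ h)
      * (A.act (Groupoid.inv (h ≫ g)) a * ξ h)‖ ≤ ‖a‖^2 * ‖fInner ξ ξ‖ := by
    refine cstar_conj_bound ξ.support _ (fun h => ξ h) ‖a‖ (norm_nonneg a) ?_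
    intro h _
    exact ⟨A.act (Groupoid.inv (h ≫ g)) a, rfl, le_of_eq (norm_starAlgEquiv _ a)⟩
  refine (Real.sqrt_le_sqrt hb).trans ?_
  rw [Real.sqrt_mul (sq_nonneg _), Real.sqrt_sq (norm_nonneg a)]

/-- The ℓ¹-type norm of an element of the convolution algebra. -/
noncomputable def l1 {x y : 𝒢} (f : A.Conv x y) : ℝ := f.sum fun _ a => ‖a‖

lemma l1_nonneg {x y : 𝒢} (f : A.Conv x y) : 0 ≤ A.l1 f :=
  Finset.sum_nonneg fun _ _ => norm_nonneg _

lemma preNorm_lam_le_l1 {x y z : 𝒢} (f : A.Conv x y) (ξ : A.PreL2 z x) :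
    A.preNorm (A.lam f ξ) ≤ A.l1 f * A.preNorm ξ := by
  classical
  induction f using Finsupp.induction with
  | zero =>
    rw [lam_zero_left, preNorm_zero]
    have : A.l1 (0 : A.Conv x y) = 0 := by simp [l1]
    rw [this, zero_mul]
  | single_add g a f hg ha ih =>
    have hdisj : Disjoint (Finsupp.single g a).support f.support := by
      rw [Finsupp.support_single_ne_zero g ha]
      simpa using hg
    have hL : A.l1 (Finsupp.single g a + f) = ‖a‖ + A.l1 f := by
      rw [l1, Finsupp.sum, Finsupp.support_add_eq hdisj,
        Finsupp.support_single_ne_zero g ha]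
      rw [show ({g} ∪ f.support : Finset (x ⟶ y)) = insert g f.support from rfl,
        Finset.sum_insert (by simpa using hg)]
      congr 1
      · rw [Finsupp.add_apply, Finsupp.single_eq_same, Finsupp.notMem_support_iff.mp hg,
          add_zero]
      · refine Finset.sum_congr rfl fun h hh => ?_
        have : h ≠ g := fun e => hg (e ▸ hh)
        rw [Finsupp.add_apply, Finsupp.single_eq_of_ne' (Ne.symm this), zero_add]
    rw [hL, lam_add_left, add_mul]
    refine (A.preNorm_add_le _ _).trans ?_
    exact add_le_add (A.preNorm_lam_single_le g a ξ) ih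

end Norms

end GCStarAlg
namespace GCStarAlg

open CategoryTheory Finsupp

section OpNormTheory

variable {𝒢 : Type u} [Groupoid 𝒢] (A : GCStarAlg 𝒢)

/-- The set of which `opNorm` is the supremum. -/
def opSet {x y : 𝒢} (f : A.Conv x y) (z : 𝒢) : Set ℝ :=
  {r : ℝ | ∃ ξ : A.PreL2 z x, A.preNorm ξ ≤ 1 ∧ r = A.preNorm (A.lam f ξ)}

lemma opNorm_def {x y : 𝒢} (f : A.Conv x y) (z : 𝒢) : A.opNorm f z = sSup (A.opSet f z) := rfl

lemma zero_mem_opSet {x y : 𝒢} (f : A.Conv x y) (z : 𝒢) : (0:ℝ) ∈ A.opSet f z :=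
  ⟨0, by rw [preNorm_zero]; exact zero_le_one, by rw [lam_zero_right, preNorm_zero]⟩

lemma opSet_nonempty {x y : 𝒢} (f : A.Conv x y) (z : 𝒢) : (A.opSet f z).Nonempty :=
  ⟨0, A.zero_mem_opSet f z⟩

lemma opSet_bddAbove {x y : 𝒢} (f : A.Conv x y) (z : 𝒢) : BddAbove (A.opSet f z) := by
  refine ⟨A.l1 f, ?_⟩
  rintro r ⟨ξ, hξ, rfl⟩
  calc A.preNorm (A.lam f ξ) ≤ A.l1 f * A.preNorm ξ := A.preNorm_lam_le_l1 f ξ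
  _ ≤ A.l1 f * 1 := by
      exact mul_le_mul_of_nonneg_left hξ (A.l1_nonneg f)
  _ = A.l1 f := mul_one _

lemma opNorm_nonneg {x y : 𝒢} (f : A.Conv x y) (z : 𝒢) : 0 ≤ A.opNorm f z :=
  le_csSup (A.opSet_bddAbove f z) (A.zero_mem_opSet f z)

lemma preNorm_lam_le_opNorm_of_le_one {x y z : 𝒢} (f : A.Conv x y) (ξ : A.PreL2 z x)
    (hξ : A.preNorm ξ ≤ 1) : A.preNorm (A.lam f ξ) ≤ A.opNorm f z :=
  le_csSup (A.opSet_bddAbove f z) ⟨ξ, hξ, rfl⟩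

lemma opNorm_le_of {x y : 𝒢} (f : A.Conv x y) (z : 𝒢) (c : ℝ)
    (h : ∀ ξ : A.PreL2 z x, A.preNorm ξ ≤ 1 → A.preNorm (A.lam f ξ) ≤ c) :
    A.opNorm f z ≤ c := by
  refine csSup_le (A.opSet_nonempty f z) ?_
  rintro r ⟨ξ, hξ, rfl⟩
  exact h ξ hξ

lemma preNorm_lam_eq_zero {x y z : 𝒢} (f : A.Conv x y) (ξ : A.PreL2 z x)
    (hξ : A.preNorm ξ = 0) : A.preNorm (A.lam f ξ) = 0 := by
  have h1 : (A.preNorm (A.lam f ξ))^2 ≤ 0 := by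
    rw [preNorm_sq, fInner_lam]
    calc ‖fInner ξ (A.lam (A.convStar f) (A.lam f ξ))‖
        ≤ A.preNorm ξ * A.preNorm (A.lam (A.convStar f) (A.lam f ξ)) :=
          A.norm_fInner_le_preNorm _ _
      _ = 0 := by rw [hξ, zero_mul]
  have h2 := A.preNorm_nonneg (A.lam f ξ)
  nlinarith

lemma preNorm_lam_le_opNorm {x y z : 𝒢} (f : A.Conv x y) (ξ : A.PreL2 z x) :
    A.preNorm (A.lam f ξ) ≤ A.opNorm f z * A.preNorm ξ := by
  rcases eq_or_lt_of_le (A.preNorm_nonneg ξ) with h0 | h0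
  · rw [A.preNorm_lam_eq_zero f ξ h0.symm, ← h0, mul_zero]
  · set t := (A.preNorm ξ)⁻¹ with ht
    have hts : 0 < t := inv_pos.mpr h0
    have h1 : A.preNorm (t • ξ) ≤ 1 := by
      rw [A.preNorm_smul, abs_of_pos hts, ht, inv_mul_cancel₀ h0.ne']
    have h2 := A.preNorm_lam_le_opNorm_of_le_one f (t • ξ) h1
    rw [A.lam_smul, A.preNorm_smul, abs_of_pos hts] at h2
    calc A.preNorm (A.lam f ξ) = (t * A.preNorm (A.lam f ξ)) * A.preNorm ξ := by
          rw [mul_comm t _, mul_assoc, ht, inv_mul_cancel₀ h0.ne', mul_one]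
    _ ≤ A.opNorm f z * A.preNorm ξ := mul_le_mul_of_nonneg_right h2 h0.le

lemma preNorm_lam_sq_le {x y z : 𝒢} (f : A.Conv x y) (ξ : A.PreL2 z x)
    (hξ : A.preNorm ξ ≤ 1) :
    (A.preNorm (A.lam f ξ))^2 ≤ A.preNorm (A.lam (A.convMul (A.convStar f) f) ξ) := by
  rw [preNorm_sq, fInner_lam, ← lam_lam]
  calc ‖fInner ξ (A.lam (A.convMul (A.convStar f) f) ξ)‖
      ≤ A.preNorm ξ * A.preNorm (A.lam (A.convMul (A.convStar f) f) ξ) :=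
        A.norm_fInner_le_preNorm _ _
    _ ≤ 1 * A.preNorm (A.lam (A.convMul (A.convStar f) f) ξ) :=
        mul_le_mul_of_nonneg_right hξ (A.preNorm_nonneg _)
    _ = _ := one_mul _

lemma opNorm_mul_le {x y w z : 𝒢} (f₂ : A.Conv y w) (f₁ : A.Conv x y) :
    A.opNorm (A.convMul f₂ f₁) z ≤ A.opNorm f₂ z * A.opNorm f₁ z := by
  refine A.opNorm_le_of _ z _ fun ξ hξ => ?_
  rw [lam_lam]
  calc A.preNorm (A.lam f₂ (A.lam f₁ ξ))
      ≤ A.opNorm f₂ z * A.preNorm (A.lam f₁ ξ) := A.preNorm_lam_le_opNorm _ _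
    _ ≤ A.opNorm f₂ z * (A.opNorm f₁ z * 1) := by
        refine mul_le_mul_of_nonneg_left ?_ (A.opNorm_nonneg f₂ z)
        have := A.preNorm_lam_le_opNorm_of_le_one f₁ ξ hξ
        rw [mul_one]
        exact this
    _ = A.opNorm f₂ z * A.opNorm f₁ z := by rw [mul_one]

lemma opNorm_sq_le {x y z : 𝒢} (f : A.Conv x y) :
    (A.opNorm f z)^2 ≤ A.opNorm (A.convMul (A.convStar f) f) z := by
  have h1 : A.opNorm f z ≤ Real.sqrt (A.opNorm (A.convMul (A.convStar f) f) z) := by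
    refine A.opNorm_le_of f z _ fun ξ hξ => ?_
    have h2 := A.preNorm_lam_sq_le f ξ hξ
    have h3 := A.preNorm_lam_le_opNorm_of_le_one (A.convMul (A.convStar f) f) ξ hξ
    have h4 : (A.preNorm (A.lam f ξ))^2 ≤ A.opNorm (A.convMul (A.convStar f) f) z :=
      h2.trans h3
    have := Real.sqrt_le_sqrt h4
    rwa [Real.sqrt_sq (A.preNorm_nonneg _)] at this
  calc (A.opNorm f z)^2 ≤ (Real.sqrt (A.opNorm (A.convMul (A.convStar f) f) z))^2 := by
        refine pow_le_pow_left₀ (A.opNorm_nonneg f z) h1 2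
    _ = A.opNorm (A.convMul (A.convStar f) f) z :=
        Real.sq_sqrt (A.opNorm_nonneg _ z)

lemma opNorm_star_eq {x y : 𝒢} (f : A.Conv x y) (z : 𝒢) :
    A.opNorm (A.convStar f) z = A.opNorm f z := by
  have key : ∀ {x' y' : 𝒢} (g : A.Conv x' y'), A.opNorm g z ≤ A.opNorm (A.convStar g) z := by
    intro x' y' g
    have h1 := A.opNorm_sq_le (z := z) g
    have h2 := A.opNorm_mul_le (z := z) (A.convStar g) g
    rcases eq_or_lt_of_le (A.opNorm_nonneg g z) with h0 | h0
    · rw [← h0]; exact A.opNorm_nonneg _ z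
    · nlinarith [A.opNorm_nonneg (A.convStar g) z]
  refine le_antisymm ((key (A.convStar f)).trans_eq ?_) (key f)
  rw [A.convStar_convStar]

/-- Iterated squaring. -/
noncomputable def sqIter {x : 𝒢} (h : A.Conv x x) : ℕ → A.Conv x x
  | 0 => h
  | (n+1) => A.convMul (sqIter h n) (sqIter h n)

lemma sqIter_star {x : 𝒢} (h : A.Conv x x) (hsa : A.convStar h = h) (n : ℕ) :
    A.convStar (A.sqIter h n) = A.sqIter h n := by
  induction n with
  | zero => rw [sqIter]; exact hsa
  | succ n ih => rw [sqIter, convStar_convMul, ih]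

lemma opNorm_sqIter_le {x : 𝒢} (h : A.Conv x x) (z : 𝒢) (n : ℕ) :
    A.opNorm (A.sqIter h n) z ≤ (A.opNorm h z)^(2^n) := by
  induction n with
  | zero => rw [sqIter, pow_zero, pow_one]
  | succ n ih =>
    rw [sqIter, pow_succ, pow_mul]
    calc A.opNorm (A.convMul (A.sqIter h n) (A.sqIter h n)) z
        ≤ A.opNorm (A.sqIter h n) z * A.opNorm (A.sqIter h n) z := A.opNorm_mul_le _ _
      _ ≤ (A.opNorm h z)^(2^n) * (A.opNorm h z)^(2^n) := by
          refine mul_le_mul ih ih (A.opNorm_nonneg _ _) ?_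
          exact (A.opNorm_nonneg _ _).trans ih
      _ = ((A.opNorm h z)^(2^n))^2 := (sq _).symm

lemma preNorm_lam_sqIter_le {x z : 𝒢} (h : A.Conv x x) (hsa : A.convStar h = h)
    (ξ : A.PreL2 z x) (hξ : A.preNorm ξ ≤ 1) (n : ℕ) :
    (A.preNorm (A.lam h ξ))^(2^n) ≤ A.preNorm (A.lam (A.sqIter h n) ξ) := by
  induction n with
  | zero => rw [sqIter, pow_zero, pow_one]
  | succ n ih =>
    have step := A.preNorm_lam_sq_le (A.sqIter h n) ξ hξ
    rw [A.sqIter_star h hsa] at step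
    calc (A.preNorm (A.lam h ξ))^(2^(n+1))
        = ((A.preNorm (A.lam h ξ))^(2^n))^2 := by rw [← pow_mul, pow_succ]
      _ ≤ (A.preNorm (A.lam (A.sqIter h n) ξ))^2 :=
          pow_le_pow_left₀ (pow_nonneg (A.preNorm_nonneg _) _) ih 2
      _ ≤ A.preNorm (A.lam (A.convMul (A.sqIter h n) (A.sqIter h n)) ξ) := step
      _ = A.preNorm (A.lam (A.sqIter h (n+1)) ξ) := by rw [sqIter]

end OpNormTheory

end GCStarAlg
namespace GCStarAlg

open CategoryTheory Finsupp

section Transport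

variable {𝒢 : Type u} [Groupoid 𝒢] (A : GCStarAlg 𝒢)

/-- Intertwining of `lam` with translation of the base object. -/
lemma lam_translate {x y w w' : 𝒢} (u : w ⟶ w') (f : A.Conv x y) (ξ : A.PreL2 w' x) :
    A.lam f (tmap (fun h : w' ⟶ x => u ≫ h) (A.act (Groupoid.inv u)) ξ)
      = tmap (fun h : w' ⟶ y => u ≫ h) (A.act (Groupoid.inv u)) (A.lam f ξ) := by
  induction f using Finsupp.induction_linear with
  | zero => rw [lam_zero_left, lam_zero_left, tmap_zero]
  | add p q hp hq => rw [lam_add_left, lam_add_left, hp, hq, tmap_add]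
  | single g a =>
    induction ξ using Finsupp.induction_linear with
    | zero => rw [tmap_zero, lam_zero_right, lam_zero_right, tmap_zero]
    | add p q hp hq => rw [tmap_add, lam_add_right, lam_add_right, hp, hq, tmap_add]
    | single h b =>
      rw [tmap_single, lam_single_single, lam_single_single, tmap_single, ← Category.assoc]
      congr 1
      rw [map_mul]
      congr 1
      have harr : Groupoid.inv ((u ≫ h) ≫ g) = Groupoid.inv (h ≫ g) ≫ Groupoid.inv u := by
        rw [ginv_comp (u ≫ h) g, ginv_comp u h, ginv_comp h g, Category.assoc]
      rw [harr, ← act_act]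

lemma preNorm_tmap {x w w' : 𝒢} (u : w ⟶ w') (ξ : A.PreL2 w' x) :
    A.preNorm (tmap (fun h : w' ⟶ x => u ≫ h) (A.act (Groupoid.inv u)) ξ) = A.preNorm ξ := by
  rw [preNorm_eq, preNorm_eq, fInner_tmap _ (comp_left_injective u), norm_starAlgEquiv]

/-- `opNorm` does not depend on the base object within a connected component. -/
lemma opNorm_translate {x y w w' : 𝒢} (u : w ⟶ w') (f : A.Conv x y) :
    A.opNorm f w' = A.opNorm f w := by
  have key : ∀ {v v' : 𝒢} (u' : v ⟶ v'), A.opNorm f v' ≤ A.opNorm f v := by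
    intro v v' u'
    refine A.opNorm_le_of f v' _ fun ξ hξ => ?_
    have h1 : A.preNorm (A.lam f (tmap (fun h : v' ⟶ x => u' ≫ h)
        (A.act (Groupoid.inv u')) ξ)) ≤ A.opNorm f v := by
      refine A.preNorm_lam_le_opNorm_of_le_one f _ ?_
      rw [A.preNorm_tmap u' ξ]
      exact hξ
    rwa [A.lam_translate u' f ξ, A.preNorm_tmap u'] at h1
  refine le_antisymm (key u) ?_
  have := key (Groupoid.inv u)
  exact this

lemma opNorm_of_isEmpty {x y z : 𝒢} (f : A.Conv x y) (hz : IsEmpty (z ⟶ x)) :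
    A.opNorm f z = 0 := by
  refine le_antisymm ?_ (A.opNorm_nonneg f z)
  refine A.opNorm_le_of f z 0 fun ξ _ => ?_
  have hξ0 : ξ = 0 := Finsupp.ext fun h => (hz.false h).elim
  rw [hξ0, lam_zero_right, preNorm_zero]

end Transport

section Faithful

variable {ℋ 𝒢 : Type u} [Groupoid ℋ] [Groupoid 𝒢] (A : GCStarAlg 𝒢) (φ : ℋ ⥤ 𝒢)

lemma map_ginv {x y : ℋ} (g : x ⟶ y) :
    φ.map (Groupoid.inv g) = Groupoid.inv (φ.map g) := by
  simp [Groupoid.inv_eq_inv]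

lemma mapF_single {x y : ℋ} (g : x ⟶ y) (a : (A.restrict φ).fiber y) :
    A.mapFaithful φ (Finsupp.single g a) = Finsupp.single (φ.map g) a :=
  Finsupp.mapDomain_single

lemma mapF_zero {x y : ℋ} : A.mapFaithful φ (0 : (A.restrict φ).Conv x y) = 0 :=
  Finsupp.mapDomain_zero

lemma mapF_add {x y : ℋ} (f f' : (A.restrict φ).Conv x y) :
    A.mapFaithful φ (f + f') = A.mapFaithful φ f + A.mapFaithful φ f' :=
  Finsupp.mapDomain_add

lemma mapF_convStar {x y : ℋ} (f : (A.restrict φ).Conv x y) :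
    A.mapFaithful φ ((A.restrict φ).convStar f) = A.convStar (A.mapFaithful φ f) := by
  induction f using Finsupp.induction_linear with
  | zero => rw [convStar_zero, mapF_zero, mapF_zero, convStar_zero]
  | add p q hp hq => rw [convStar_add, mapF_add, mapF_add, convStar_add, hp, hq]
  | single g a =>
    erw [convStar_single, mapF_single, mapF_single, convStar_single, restrict_act, map_ginv]
    rfl

lemma mapF_convMul {x y z : ℋ} (f₂ : (A.restrict φ).Conv y z) (f₁ : (A.restrict φ).Conv x y) :
    A.mapFaithful φ ((A.restrict φ).convMul f₂ f₁)
      = A.convMul (A.mapFaithful φ f₂) (A.mapFaithful φ f₁) := by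
  induction f₂ using Finsupp.induction_linear with
  | zero => rw [convMul_zero_left, mapF_zero, mapF_zero, convMul_zero_left]
  | add p q hp hq => rw [convMul_add_left, mapF_add, mapF_add, convMul_add_left, hp, hq]
  | single g₂ a₂ =>
    induction f₁ using Finsupp.induction_linear with
    | zero => rw [convMul_zero_right, mapF_zero, mapF_zero, convMul_zero_right]
    | add p q hp hq => rw [convMul_add_right, mapF_add, mapF_add, convMul_add_right, hp, hq]
    | single g₁ a₁ =>
      erw [convMul_single_single, mapF_single, mapF_single, mapF_single,
        convMul_single_single, φ.map_comp, restrict_act]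
      rfl

lemma mapF_sqIter {x : ℋ} (h : (A.restrict φ).Conv x x) (n : ℕ) :
    A.mapFaithful φ ((A.restrict φ).sqIter h n) = A.sqIter (A.mapFaithful φ h) n := by
  induction n with
  | zero => rw [sqIter, sqIter]
  | succ n ih => rw [sqIter, sqIter, mapF_convMul, ih]

/-- The identity star-equivalence between the fibre of the restricted algebra and the
original fibre. -/
def wId (z : ℋ) : ((A.restrict φ).fiber z) ≃⋆ₐ[ℂ] A.fiber (φ.obj z) := StarAlgEquiv.refl ℂ _

lemma mapF_lam (hφ : φ.Faithful) {x y z : ℋ} (f : (A.restrict φ).Conv x y)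
    (ξ : (A.restrict φ).PreL2 z x) :
    A.lam (A.mapFaithful φ f) (tmap (fun g : z ⟶ x => φ.map g) (A.wId φ z) ξ)
      = tmap (fun g : z ⟶ y => φ.map g) (A.wId φ z) ((A.restrict φ).lam f ξ) := by
  induction f using Finsupp.induction_linear with
  | zero => rw [lam_zero_left, mapF_zero, lam_zero_left, tmap_zero]
  | add p q hp hq => rw [lam_add_left, mapF_add, lam_add_left, hp, hq, tmap_add]
  | single g a =>
    induction ξ using Finsupp.induction_linear with
    | zero => rw [tmap_zero, lam_zero_right, lam_zero_right, tmap_zero]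
    | add p q hp hq => rw [tmap_add, lam_add_right, lam_add_right, hp, hq, tmap_add]
    | single h b =>
      erw [tmap_single, mapF_single, lam_single_single, lam_single_single, tmap_single,
        ← φ.map_comp, ← map_ginv, restrict_act]
      rfl

lemma preNorm_tmap_wId {x z : ℋ} (hφ : φ.Faithful) (ξ : (A.restrict φ).PreL2 z x) :
    A.preNorm (tmap (fun g : z ⟶ x => φ.map g) (A.wId φ z) ξ) = (A.restrict φ).preNorm ξ := by
  rw [preNorm_eq, preNorm_eq, fInner_tmap _ (fun a b hab => hφ.map_injective hab),
    norm_starAlgEquiv]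

end Faithful

end GCStarAlg
section Ksum

open scoped Classical

variable {ι : Type*} {B : Type*} [NonUnitalCStarAlgebra B]

/-- The ℓ²-sum of the squared norms of the coefficients. -/
noncomputable def ksum (ξ : ι →₀ B) : ℝ := ∑ h ∈ ξ.support, ‖ξ h‖^2

lemma ksum_nonneg (ξ : ι →₀ B) : 0 ≤ ksum ξ :=
  Finset.sum_nonneg fun _ _ => sq_nonneg _

lemma ksum_zero : ksum (0 : ι →₀ B) = 0 := by simp [ksum]

lemma norm_fInner_self_le_ksum (ξ : ι →₀ B) : ‖fInner ξ ξ‖ ≤ ksum ξ :=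
  norm_fInner_self_le ξ

lemma ksum_filter_add_ksum_filter_not (ξ : ι →₀ B) (p : ι → Prop) :
    ksum (ξ.filter p) + ksum (ξ.filter fun a => ¬ p a) = ksum ξ := by
  have e1 : ksum (ξ.filter p) = ∑ h ∈ ξ.support.filter p, ‖ξ h‖^2 := by
    rw [ksum, Finsupp.support_filter]
    refine Finset.sum_congr rfl fun h hh => ?_
    rw [Finsupp.filter_apply_pos p _ (Finset.mem_filter.mp hh).2]
  have e2 : ksum (ξ.filter fun a => ¬ p a) = ∑ h ∈ ξ.support.filter (fun a => ¬ p a), ‖ξ h‖^2 := by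
    rw [ksum, Finsupp.support_filter]
    refine Finset.sum_congr rfl fun h hh => ?_
    rw [Finsupp.filter_apply_pos (fun a => ¬ p a) ξ (Finset.mem_filter.mp hh).2]
  rw [e1, e2, ksum]
  exact Finset.sum_filter_add_sum_filter_not _ _ _

end Ksum

namespace GCStarAlg

open CategoryTheory Finsupp

section Block

open scoped Classical

variable {ℋ 𝒢 : Type u} [Groupoid ℋ] [Groupoid 𝒢] (A : GCStarAlg 𝒢) (φ : ℋ ⥤ 𝒢)

lemma lam_support {𝒦 : Type u} [Groupoid 𝒦] (B : GCStarAlg 𝒦) {x y z : 𝒦}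
    (f : B.Conv x y) (ξ : B.PreL2 z x) :
    ∀ m ∈ (B.lam f ξ).support, ∃ g ∈ f.support, ∃ h ∈ ξ.support, m = h ≫ g := by
  intro m hm
  rw [lam] at hm
  have h1 := Finsupp.support_sum hm
  rw [Finset.mem_biUnion] at h1
  obtain ⟨g, hg, hm1⟩ := h1
  have h2 := Finsupp.support_sum hm1
  rw [Finset.mem_biUnion] at h2
  obtain ⟨h, hh, hm2⟩ := h2
  have h3 := Finsupp.support_single_subset hm2
  rw [Finset.mem_singleton] at h3
  exact ⟨g, hg, h, hh, h3⟩

/-- The parametrisation of the `h₀`-block. -/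
def blk {z x y' : ℋ} (e : z ⟶ x) (h₀ : φ.obj z ⟶ φ.obj x) (k : z ⟶ y') :
    φ.obj z ⟶ φ.obj y' :=
  h₀ ≫ φ.map (Groupoid.inv e ≫ k)

lemma blk_injective (hφ : φ.Faithful) {z x y' : ℋ} (e : z ⟶ x) (h₀ : φ.obj z ⟶ φ.obj x) :
    Function.Injective (blk φ e h₀ (y' := y')) := by
  intro k k' hk
  rw [blk, blk] at hk
  have h1 := comp_left_injective h₀ hk
  have h2 := hφ.map_injective h1
  exact comp_left_injective (Groupoid.inv e) h2

/-- The twisting star-isomorphism of the `h₀`-block. -/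
noncomputable def wblk {z x : ℋ} (e : z ⟶ x) (h₀ : φ.obj z ⟶ φ.obj x) :
    ((A.restrict φ).fiber z) ≃⋆ₐ[ℂ] A.fiber (φ.obj z) :=
  A.act (φ.map e ≫ Groupoid.inv h₀)

lemma blk_comp {z x y' : ℋ} (e : z ⟶ x) (h₀ : φ.obj z ⟶ φ.obj x) (k : z ⟶ x) (g : x ⟶ y') :
    blk φ e h₀ k ≫ φ.map g = blk φ e h₀ (k ≫ g) := by
  rw [blk, blk, Category.assoc, ← φ.map_comp, Category.assoc]

lemma blockLam {x y z : ℋ} (e : z ⟶ x) (h₀ : φ.obj z ⟶ φ.obj x)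
    (f : (A.restrict φ).Conv x y) (η : (A.restrict φ).PreL2 z x) :
    A.lam (A.mapFaithful φ f) (tmap (blk φ e h₀) (A.wblk φ e h₀) η)
      = tmap (blk φ e h₀) (A.wblk φ e h₀) ((A.restrict φ).lam f η) := by
  induction f using Finsupp.induction_linear with
  | zero => rw [lam_zero_left, mapF_zero, lam_zero_left, tmap_zero]
  | add p q hp hq => rw [lam_add_left, mapF_add, lam_add_left, hp, hq, tmap_add]
  | single g a =>
    induction η using Finsupp.induction_linear with
    | zero => rw [tmap_zero, lam_zero_right, lam_zero_right, tmap_zero]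
    | add p q hp hq => rw [tmap_add, lam_add_right, lam_add_right, hp, hq, tmap_add]
    | single k b =>
      erw [tmap_single, mapF_single, lam_single_single, lam_single_single, tmap_single,
        blk_comp]
      congr 1
      rw [map_mul]
      congr 1
      have harr : Groupoid.inv (blk φ e h₀ (k ≫ g))
          = φ.map (Groupoid.inv (k ≫ g)) ≫ (φ.map e ≫ Groupoid.inv h₀) := by
        rw [blk, ginv_comp h₀ _, ← map_ginv, ginv_comp (Groupoid.inv e) (k ≫ g), ginv_ginv,
          φ.map_comp, Category.assoc]
      erw [harr, ← act_act, restrict_act]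
      rfl

/-- The key bound: the norm of `Λ_{A,𝒢,φ(z)}(f') ξ` in terms of the reduced norm of `f`
on the `ℋ`-side, for arbitrary `ξ`. -/
lemma gside_bound (hφ : φ.Faithful) {x y z : ℋ} (e : z ⟶ x) (f : (A.restrict φ).Conv x y)
    (ξ : A.PreL2 (φ.obj z) (φ.obj x)) :
    ‖fInner (A.lam (A.mapFaithful φ f) ξ) (A.lam (A.mapFaithful φ f) ξ)‖
      ≤ ((A.restrict φ).opNorm f z)^2 * ksum ξ := by
  set M := (A.restrict φ).opNorm f z with hM
  have hM0 : 0 ≤ M := (A.restrict φ).opNorm_nonneg f z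
  suffices H : ∀ (n : ℕ) (ξ : A.PreL2 (φ.obj z) (φ.obj x)), ξ.support.card ≤ n →
      ‖fInner (A.lam (A.mapFaithful φ f) ξ) (A.lam (A.mapFaithful φ f) ξ)‖ ≤ M^2 * ksum ξ by
    exact H ξ.support.card ξ le_rfl
  intro n
  induction n with
  | zero =>
    intro ξ hcard
    have h0 : ξ = 0 := by
      rw [← Finsupp.support_eq_empty]
      exact Finset.card_eq_zero.mp (Nat.le_zero.mp hcard)
    rw [h0, lam_zero_right, fInner_zero_left, norm_zero, ksum_zero, mul_zero]
  | succ n ih =>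
    intro ξ hcard
    by_cases hle : ξ.support.card ≤ n
    · exact ih ξ hle
    -- pick h₀ in the support
    have hne : ξ.support.Nonempty := by
      rw [← Finset.card_pos]
      omega
    obtain ⟨h₀, hh₀⟩ := hne
    set p : (φ.obj z ⟶ φ.obj x) → Prop := fun c => ∃ m : x ⟶ x, c = h₀ ≫ φ.map m with hp
    have hph₀ : p h₀ := ⟨𝟙 x, by rw [CategoryTheory.Functor.map_id, Category.comp_id]⟩
    set ξ₁ := ξ.filter p with hξ₁
    set ξ₂ := ξ.filter (fun c => ¬ p c) with hξ₂
    have hsplit : ξ₁ + ξ₂ = ξ := Finsupp.filter_pos_add_filter_neg ξ p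
    -- the complement has smaller support
    have hcard₂ : ξ₂.support.card ≤ n := by
      have hsub : ξ₂.support ⊆ ξ.support.erase h₀ := by
        intro c hc
        rw [hξ₂, Finsupp.support_filter, Finset.mem_filter] at hc
        refine Finset.mem_erase.mpr ⟨?_, hc.1⟩
        intro hch
        exact hc.2 (hch ▸ hph₀)
      refine (Finset.card_le_card hsub).trans ?_
      rw [Finset.card_erase_of_mem hh₀]
      omega
    -- ξ₁ is a transported vector
    set w := A.wblk φ e h₀ with hw
    set ψ : (z ⟶ x) → (φ.obj z ⟶ φ.obj x) := blk φ e h₀ with hψ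
    have hψinj : Function.Injective ψ := blk_injective φ hφ e h₀
    have hmem_range : ∀ c ∈ ξ₁.support, ∃ k : z ⟶ x, ψ k = c := by
      intro c hc
      rw [hξ₁, Finsupp.support_filter, Finset.mem_filter] at hc
      obtain ⟨m, rfl⟩ := hc.2
      refine ⟨e ≫ m, ?_⟩
      rw [hψ, blk, ← Category.assoc, Groupoid.inv_comp, Category.id_comp]
    set η : (A.restrict φ).PreL2 z x :=
      (ξ₁.comapDomain ψ (hψinj.injOn)).mapRange w.symm (map_zero _) with hη
    have hξ₁η : ξ₁ = tmap ψ w η := by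
      ext c
      by_cases hcr : ∃ k : z ⟶ x, ψ k = c
      · obtain ⟨k, rfl⟩ := hcr
        rw [tmap_apply ψ hψinj w η k, hη, Finsupp.mapRange_apply, Finsupp.comapDomain_apply,
          StarAlgEquiv.apply_symm_apply]
      · rw [tmap_notin ψ w η c (by simpa using hcr)]
        by_contra hc0
        exact hcr (hmem_range c (Finsupp.mem_support_iff.mpr hc0))
    -- block bound for ξ₁
    have hblock : ‖fInner (A.lam (A.mapFaithful φ f) ξ₁) (A.lam (A.mapFaithful φ f) ξ₁)‖
        ≤ M^2 * ksum ξ₁ := by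
      rw [hξ₁η, blockLam, fInner_tmap _ (blk_injective φ hφ e h₀), norm_starAlgEquiv]
      have h1 : ‖fInner ((A.restrict φ).lam f η) ((A.restrict φ).lam f η)‖
          = ((A.restrict φ).preNorm ((A.restrict φ).lam f η))^2 :=
        ((A.restrict φ).preNorm_sq _).symm
      rw [h1]
      have h2 : (A.restrict φ).preNorm ((A.restrict φ).lam f η)
          ≤ M * (A.restrict φ).preNorm η := (A.restrict φ).preNorm_lam_le_opNorm f η
      have h3 : ((A.restrict φ).preNorm ((A.restrict φ).lam f η))^2
          ≤ (M * (A.restrict φ).preNorm η)^2 :=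
        pow_le_pow_left₀ ((A.restrict φ).preNorm_nonneg _) h2 2
      refine h3.trans ?_
      rw [mul_pow, (A.restrict φ).preNorm_sq η]
      refine mul_le_mul_of_nonneg_left ?_ (by positivity)
      have h4 : ‖fInner η η‖ = ‖fInner ξ₁ ξ₁‖ := by
        rw [hξ₁η, fInner_tmap _ (blk_injective φ hφ e h₀), norm_starAlgEquiv]
      rw [h4, ← hξ₁η]
      exact norm_fInner_self_le_ksum ξ₁
    -- supports of the two images are disjoint
    have hdisj : ∀ m ∈ (A.lam (A.mapFaithful φ f) ξ₁).support,
        m ∉ (A.lam (A.mapFaithful φ f) ξ₂).support := by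
      intro m hm1 hm2
      obtain ⟨g₁', hg₁, h₁, hh₁, hm₁⟩ := lam_support A (A.mapFaithful φ f) ξ₁ m hm1
      obtain ⟨g₂', hg₂, h₂, hh₂, hm₂⟩ := lam_support A (A.mapFaithful φ f) ξ₂ m hm2
      have hg₁' := Finsupp.mapDomain_support hg₁
      have hg₂' := Finsupp.mapDomain_support hg₂
      rw [Finset.mem_image] at hg₁' hg₂'
      obtain ⟨g₁, _, rfl⟩ := hg₁'
      obtain ⟨g₂, _, rfl⟩ := hg₂'
      rw [hξ₁, Finsupp.support_filter, Finset.mem_filter] at hh₁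
      rw [hξ₂, Finsupp.support_filter, Finset.mem_filter] at hh₂
      obtain ⟨m₁, rfl⟩ := hh₁.2
      refine hh₂.2 ⟨m₁ ≫ g₁ ≫ Groupoid.inv g₂, ?_⟩
      have he : h₂ ≫ φ.map g₂ = ((h₀ ≫ φ.map m₁) ≫ φ.map g₁) := by rw [← hm₂, hm₁]
      have := congrArg (· ≫ Groupoid.inv (φ.map g₂)) he
      simp only [Category.assoc, Groupoid.comp_inv, Category.comp_id] at this
      rw [this, ← map_ginv, ← φ.map_comp, ← φ.map_comp]
    -- assemble
    have hlam : A.lam (A.mapFaithful φ f) ξ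
        = A.lam (A.mapFaithful φ f) ξ₁ + A.lam (A.mapFaithful φ f) ξ₂ := by
      rw [← hsplit, lam_add_right]
    have hcross1 : fInner (A.lam (A.mapFaithful φ f) ξ₁) (A.lam (A.mapFaithful φ f) ξ₂) = 0 :=
      fInner_disjoint _ _ hdisj
    have hcross2 : fInner (A.lam (A.mapFaithful φ f) ξ₂) (A.lam (A.mapFaithful φ f) ξ₁) = 0 := by
      rw [← star_fInner, hcross1, star_zero]
    rw [hlam, fInner_add_left, fInner_add_right, fInner_add_right, hcross1, hcross2,
      add_zero, zero_add]
    calc ‖fInner (A.lam (A.mapFaithful φ f) ξ₁) (A.lam (A.mapFaithful φ f) ξ₁)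
            + fInner (A.lam (A.mapFaithful φ f) ξ₂) (A.lam (A.mapFaithful φ f) ξ₂)‖
        ≤ ‖fInner (A.lam (A.mapFaithful φ f) ξ₁) (A.lam (A.mapFaithful φ f) ξ₁)‖
            + ‖fInner (A.lam (A.mapFaithful φ f) ξ₂) (A.lam (A.mapFaithful φ f) ξ₂)‖ :=
          norm_add_le _ _
      _ ≤ M^2 * ksum ξ₁ + M^2 * ksum ξ₂ := add_le_add hblock (ih ξ₂ hcard₂)
      _ = M^2 * (ksum ξ₁ + ksum ξ₂) := by ring
      _ = M^2 * ksum ξ := by rw [hξ₁, hξ₂, ksum_filter_add_ksum_filter_not ξ p]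

end Block

end GCStarAlg
lemma pow_limit_le {r M K' : ℝ} (hr : 0 ≤ r) (hM : 0 ≤ M) (hK : 0 ≤ K')
    (h : ∀ n : ℕ, r^(2^(n+1)) ≤ M^(2^(n+1)) * K') : r ≤ M := by
  by_contra hlt
  push_neg at hlt
  have hr0 : 0 < r := lt_of_le_of_lt hM hlt
  rcases eq_or_lt_of_le hM with hM0 | hM0
  · have h1 := h 0
    rw [← hM0] at h1
    norm_num at h1
    nlinarith
  · have hq : 1 < r / M := (one_lt_div hM0).mpr hlt
    obtain ⟨n, hn⟩ := pow_unbounded_of_one_lt K' hq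
    have h2 : (r/M)^(2^(n+1)) ≤ K' := by
      rw [div_pow, div_le_iff₀ (pow_pos hM0 _)]
      calc r^(2^(n+1)) ≤ M^(2^(n+1)) * K' := h n
      _ = K' * M^(2^(n+1)) := mul_comm _ _
    have hle : n ≤ 2^(n+1) :=
      le_of_lt (lt_of_lt_of_le (Nat.lt_two_pow_self (n := n)) (Nat.pow_le_pow_right (by norm_num)
        (Nat.le_succ n)))
    have h3 : (r/M)^n ≤ (r/M)^(2^(n+1)) := pow_le_pow_right₀ hq.le hle
    linarith

namespace GCStarAlg

open CategoryTheory Finsupp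

section Main

variable {ℋ 𝒢 : Type u} [Groupoid ℋ] [Groupoid 𝒢] (A : GCStarAlg 𝒢) (φ : ℋ ⥤ 𝒢)

/-- The main norm equality: `‖Λ_{A,ℋ,z}(f)‖ = ‖Λ_{A,𝒢,φ(z)}((id_A φ)(f))‖`. -/
lemma opNorm_mapF (hφ : φ.Faithful) {x y z : ℋ} (e : z ⟶ x) (f : (A.restrict φ).Conv x y) :
    (A.restrict φ).opNorm f z = A.opNorm (A.mapFaithful φ f) (φ.obj z) := by
  set M := (A.restrict φ).opNorm f z with hMdef
  have hM0 : 0 ≤ M := (A.restrict φ).opNorm_nonneg f z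
  refine le_antisymm ?_ ?_
  · -- M ≤ opNorm of the image
    refine csSup_le ((A.restrict φ).opSet_nonempty f z) ?_
    rintro r ⟨ξ, hξ, rfl⟩
    have h1 : (A.restrict φ).preNorm ((A.restrict φ).lam f ξ)
        = A.preNorm (A.lam (A.mapFaithful φ f)
            (tmap (fun g : z ⟶ x => φ.map g) (A.wId φ z) ξ)) := by
      rw [mapF_lam A φ hφ, preNorm_tmap_wId A φ hφ]
    rw [h1]
    refine A.preNorm_lam_le_opNorm_of_le_one _ _ ?_
    rw [preNorm_tmap_wId A φ hφ]
    exact hξ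
  · -- opNorm of the image ≤ M
    refine A.opNorm_le_of _ (φ.obj z) M fun ξ hξ => ?_
    set f' := A.mapFaithful φ f with hf'
    set r := A.preNorm (A.lam f' ξ) with hr
    have hr0 : 0 ≤ r := A.preNorm_nonneg _
    set h := (A.restrict φ).convMul ((A.restrict φ).convStar f) f with hh
    have hsa : (A.restrict φ).convStar h = h := by
      rw [hh, convStar_convMul, convStar_convStar]
    have hmap : A.mapFaithful φ h = A.convMul (A.convStar f') f' := by
      rw [hh, mapF_convMul, mapF_convStar]
    have hsa' : A.convStar (A.mapFaithful φ h) = A.mapFaithful φ h := by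
      rw [← mapF_convStar, hsa]
    have hMh : (A.restrict φ).opNorm h z ≤ M^2 := by
      calc (A.restrict φ).opNorm h z
          ≤ (A.restrict φ).opNorm ((A.restrict φ).convStar f) z * M :=
            (A.restrict φ).opNorm_mul_le _ _
        _ = M * M := by rw [(A.restrict φ).opNorm_star_eq f z]
        _ = M^2 := (sq M).symm
    have key : ∀ n : ℕ, r^(2^(n+1)) ≤ (M^2)^(2^n) * Real.sqrt (ksum ξ) := by
      intro n
      have s1 : r^2 ≤ A.preNorm (A.lam (A.mapFaithful φ h) ξ) := by
        have := A.preNorm_lam_sq_le f' ξ hξ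
        rwa [← hmap] at this
      have s2 : (A.preNorm (A.lam (A.mapFaithful φ h) ξ))^(2^n)
          ≤ A.preNorm (A.lam (A.sqIter (A.mapFaithful φ h) n) ξ) :=
        A.preNorm_lam_sqIter_le _ hsa' ξ hξ n
      have s3 : A.sqIter (A.mapFaithful φ h) n
          = A.mapFaithful φ ((A.restrict φ).sqIter h n) := (mapF_sqIter A φ h n).symm
      have s4 : (A.preNorm (A.lam (A.mapFaithful φ ((A.restrict φ).sqIter h n)) ξ))^2
          ≤ ((A.restrict φ).opNorm ((A.restrict φ).sqIter h n) z)^2 * ksum ξ := by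
        rw [preNorm_sq]
        exact gside_bound A φ hφ e _ ξ
      have s5 : A.preNorm (A.lam (A.mapFaithful φ ((A.restrict φ).sqIter h n)) ξ)
          ≤ ((A.restrict φ).opNorm ((A.restrict φ).sqIter h n) z) * Real.sqrt (ksum ξ) := by
        have h5 := Real.sqrt_le_sqrt s4
        rwa [Real.sqrt_sq (A.preNorm_nonneg _), Real.sqrt_mul (sq_nonneg _),
          Real.sqrt_sq ((A.restrict φ).opNorm_nonneg _ _)] at h5
      have s6 : (A.restrict φ).opNorm ((A.restrict φ).sqIter h n) z ≤ (M^2)^(2^n) := by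
        refine ((A.restrict φ).opNorm_sqIter_le h z n).trans ?_
        exact pow_le_pow_left₀ ((A.restrict φ).opNorm_nonneg _ _) hMh _
      calc r^(2^(n+1)) = (r^2)^(2^n) := by rw [← pow_mul, pow_succ']
        _ ≤ (A.preNorm (A.lam (A.mapFaithful φ h) ξ))^(2^n) :=
            pow_le_pow_left₀ (sq_nonneg r) s1 _
        _ ≤ A.preNorm (A.lam (A.sqIter (A.mapFaithful φ h) n) ξ) := s2
        _ = A.preNorm (A.lam (A.mapFaithful φ ((A.restrict φ).sqIter h n)) ξ) := by rw [s3]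
        _ ≤ ((A.restrict φ).opNorm ((A.restrict φ).sqIter h n) z) * Real.sqrt (ksum ξ) := s5
        _ ≤ (M^2)^(2^n) * Real.sqrt (ksum ξ) :=
            mul_le_mul_of_nonneg_right s6 (Real.sqrt_nonneg _)
    have key' : ∀ n : ℕ, r^(2^(n+1)) ≤ M^(2^(n+1)) * Real.sqrt (ksum ξ) := by
      intro n
      have : (M^2)^(2^n) = M^(2^(n+1)) := by rw [← pow_mul, pow_succ']
      rw [← this]
      exact key n
    exact pow_limit_le hr0 hM0 (Real.sqrt_nonneg _) key'

lemma redNorm_mapF (hφ : φ.Faithful) {x y : ℋ} (f : (A.restrict φ).Conv x y) :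
    (A.restrict φ).redNorm f = A.redNorm (A.mapFaithful φ f) := by
  set V := (A.restrict φ).opNorm f x with hV
  have hV0 : 0 ≤ V := (A.restrict φ).opNorm_nonneg f x
  have hVmap : A.opNorm (A.mapFaithful φ f) (φ.obj x) = V :=
    (opNorm_mapF A φ hφ (𝟙 x) f).symm
  have hH : ∀ z : ℋ, (A.restrict φ).opNorm f z ≤ V := by
    intro z
    by_cases hz : Nonempty (z ⟶ x)
    · obtain ⟨e⟩ := hz
      rw [hV, (A.restrict φ).opNorm_translate e f]
    · rw [(A.restrict φ).opNorm_of_isEmpty f (not_nonempty_iff.mp hz)]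
      exact hV0
  have hG : ∀ w : 𝒢, A.opNorm (A.mapFaithful φ f) w ≤ V := by
    intro w
    by_cases hw : Nonempty (w ⟶ φ.obj x)
    · obtain ⟨u⟩ := hw
      rw [← A.opNorm_translate u (A.mapFaithful φ f), hVmap]
    · rw [A.opNorm_of_isEmpty (A.mapFaithful φ f) (not_nonempty_iff.mp hw)]
      exact hV0
  haveI : Nonempty ℋ := ⟨x⟩
  haveI : Nonempty 𝒢 := ⟨φ.obj x⟩
  have h1 : (A.restrict φ).redNorm f = V := by
    refine le_antisymm (ciSup_le hH) ?_
    exact le_ciSup ⟨V, by rintro r ⟨z, rfl⟩; exact hH z⟩ x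
  have h2 : A.redNorm (A.mapFaithful φ f) = V := by
    refine le_antisymm (ciSup_le hG) ?_
    rw [← hVmap]
    exact le_ciSup ⟨V, by rintro r ⟨w, rfl⟩; exact hG w⟩ (φ.obj x)
  rw [h1, h2]

end Main

end GCStarAlg

/-- Let `𝒢` be a groupoid, `A` a `𝒢`-C*-algebra and `φ : ℋ → 𝒢` a faithful
groupoid morphism; regard `A` as an `ℋ`-C*-algebra by precomposition with `φ`.  Then the
natural *-functor `id_A φ : Aℋ → A𝒢` (given by `x ↦ φ(x)` on objects and
`a u_g ↦ a u_{φ(g)}` on morphisms) is a *-functor which is isometric for the reduced norms,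
and hence extends to an isometric C*-functor `id_A ⋊_r φ : A ⋊_r ℋ → A ⋊_r 𝒢`.  In
particular, for all objects `x, y, z` of `ℋ` with `ℋ(z,x)` nonempty and all
`f ∈ Aℋ(x,y)`, one has `‖Λ_{A,ℋ,z}(f)‖ = ‖Λ_{A,𝒢,φ(z)}((id_A φ)(f))‖`. -/
theorem GCStarAlg.mapFaithful_isometric {ℋ 𝒢 : Type u} [Groupoid ℋ] [Groupoid 𝒢]
    (A : GCStarAlg 𝒢) (φ : ℋ ⥤ 𝒢) (hφ : φ.Faithful) :
    (∀ {x y : ℋ} (f : (A.restrict φ).Conv x y),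
      A.mapFaithful φ ((A.restrict φ).convStar f) = A.convStar (A.mapFaithful φ f)) ∧
    (∀ {x y z : ℋ} (f₂ : (A.restrict φ).Conv y z) (f₁ : (A.restrict φ).Conv x y),
      A.mapFaithful φ ((A.restrict φ).convMul f₂ f₁)
        = A.convMul (A.mapFaithful φ f₂) (A.mapFaithful φ f₁)) ∧
    (∀ (x y z : ℋ), Nonempty (z ⟶ x) → ∀ f : (A.restrict φ).Conv x y,
      (A.restrict φ).opNorm f z = A.opNorm (A.mapFaithful φ f) (φ.obj z)) ∧
    (∀ {x y : ℋ} (f : (A.restrict φ).Conv x y),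
      (A.restrict φ).redNorm f = A.redNorm (A.mapFaithful φ f)) := by
  refine ⟨fun f => A.mapF_convStar φ f, fun f₂ f₁ => A.mapF_convMul φ f₂ f₁,
    fun x y z hz f => ?_, fun f => A.redNorm_mapF φ hφ f⟩
  obtain ⟨e⟩ := hz
  exact A.opNorm_mapF φ hφ e f
end

section
/- Let 𝒜 be a C*-category, B a C*-algebra, and F: 𝒜 → B a C*-functor satisfying F(f)F(g) = 0 whenever f and g are non-composable morphisms of 𝒜. Suppose F is isometric on each morphism set and the induced *-homomorphism C*₀F: C*₀𝒜 → B is injective. Then the induced *-homomorphism C*F: C*𝒜 → B is isometric. -/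
universe u v

/-- A (possibly nonunital) C*-category: a small category whose morphism sets are complex
Banach spaces equipped with conjugate-linear involutions `* : 𝒜(x,y) → 𝒜(y,x)` satisfying
`(a*)* = a`, `‖ab‖ ≤ ‖a‖ ‖b‖`, `‖a* a‖ = ‖a‖²`, `(ab)* = b* a*` and `a* a ≥ 0` (the last
axiom expressed by `a* a` being of the form `b* b` for an endomorphism `b`).  Identity
morphisms are not required. -/
structure CStarCategory where
  Obj : Type u
  Hom : Obj → Obj → Type v
  [nacg : ∀ x y, NormedAddCommGroup (Hom x y)]
  [nsp : ∀ x y, NormedSpace ℂ (Hom x y)]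
  [complete : ∀ x y, CompleteSpace (Hom x y)]
  /-- composition: `comp g f = g ∘ f` -/
  comp : ∀ {x y z : Obj}, Hom y z → Hom x y → Hom x z
  /-- the involution -/
  star : ∀ {x y : Obj}, Hom x y → Hom y x
  comp_assoc : ∀ {w x y z : Obj} (h : Hom y z) (g : Hom x y) (f : Hom w x),
    comp (comp h g) f = comp h (comp g f)
  add_comp : ∀ {x y z : Obj} (g g' : Hom y z) (f : Hom x y),
    comp (g + g') f = comp g f + comp g' f
  comp_add : ∀ {x y z : Obj} (g : Hom y z) (f f' : Hom x y),
    comp g (f + f') = comp g f + comp g f'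
  smul_comp : ∀ {x y z : Obj} (c : ℂ) (g : Hom y z) (f : Hom x y),
    comp (c • g) f = c • comp g f
  comp_smul : ∀ {x y z : Obj} (c : ℂ) (g : Hom y z) (f : Hom x y),
    comp g (c • f) = c • comp g f
  star_add : ∀ {x y : Obj} (f g : Hom x y), star (f + g) = star f + star g
  star_smul : ∀ {x y : Obj} (c : ℂ) (f : Hom x y),
    star (c • f) = (starRingEnd ℂ c) • star f
  star_star : ∀ {x y : Obj} (f : Hom x y), star (star f) = f
  star_comp : ∀ {x y z : Obj} (g : Hom y z) (f : Hom x y),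
    star (comp g f) = comp (star f) (star g)
  norm_comp_le : ∀ {x y z : Obj} (g : Hom y z) (f : Hom x y), ‖comp g f‖ ≤ ‖g‖ * ‖f‖
  norm_star_comp_self : ∀ {x y : Obj} (f : Hom x y), ‖comp (star f) f‖ = ‖f‖ ^ 2
  star_comp_self_nonneg : ∀ {x y : Obj} (f : Hom x y),
    ∃ b : Hom x x, comp (star f) f = comp (star b) b

namespace CStarCategory

attribute [instance] CStarCategory.nacg CStarCategory.nsp CStarCategory.complete

variable (𝒜 : CStarCategory)

/-- The underlying vector space of the *-algebra `C*₀𝒜 = ⊕_{x,y} 𝒜(x,y)`, as finitely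
supported dependent functions. -/
abbrev C0 : Type _ := Π₀ p : 𝒜.Obj × 𝒜.Obj, 𝒜.Hom p.1 p.2

open scoped Classical in
/-- The product of the *-algebra `C*₀𝒜`: for `f ∈ 𝒜(x,y)` and `g ∈ 𝒜(z,w)`,
`f · g := f ∘ g` if the morphisms are composable (`w = x`) and `0` otherwise. -/
noncomputable def c0Mul (a b : 𝒜.C0) : 𝒜.C0 :=
  DFinsupp.sum a fun p f => DFinsupp.sum b fun q g =>
    if h : q.2 = p.1 then DFinsupp.single (q.1, p.2) (𝒜.comp f (h ▸ g)) else 0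

open scoped Classical in
/-- The involution of the *-algebra `C*₀𝒜`, inherited from `𝒜`. -/
noncomputable def c0Star (a : 𝒜.C0) : 𝒜.C0 :=
  DFinsupp.sum a fun p f => DFinsupp.single (p.2, p.1) (𝒜.star f)

open scoped Classical in
/-- The inclusion of the morphism set `𝒜(x,y)` into `C*₀𝒜`. -/
noncomputable def ofHom (x y : 𝒜.Obj) (f : 𝒜.Hom x y) : 𝒜.C0 :=
  DFinsupp.single (x, y) f

/-- A C*-seminorm on the *-algebra `C*₀𝒜`: a submultiplicative seminorm `ρ` with
`ρ(a* a) = ρ(a)²`. -/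
structure IsCStarSeminorm (ρ : 𝒜.C0 → ℝ) : Prop where
  nonneg : ∀ a, 0 ≤ ρ a
  add_le : ∀ a b, ρ (a + b) ≤ ρ a + ρ b
  smul_eq : ∀ (c : ℂ) (a), ρ (c • a) = ‖c‖ * ρ a
  mul_le : ∀ a b, ρ (𝒜.c0Mul a b) ≤ ρ a * ρ b
  cstar : ∀ a, ρ (𝒜.c0Mul (𝒜.c0Star a) a) = ρ a ^ 2

end CStarCategory

namespace CStarCategory

variable (𝒜 : CStarCategory)

/-- A C*-functor `F : 𝒜 → B` from a C*-category to a C*-algebra `B` (viewed as a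
one-object C*-category): linear on morphism sets, involution- and
composition-preserving. -/
structure IsCStarFunctorTo {B : Type*} [NonUnitalCStarAlgebra B]
    (F : ∀ {x y : 𝒜.Obj}, 𝒜.Hom x y → B) : Prop where
  map_add : ∀ {x y : 𝒜.Obj} (f g : 𝒜.Hom x y), F (f + g) = F f + F g
  map_smul : ∀ {x y : 𝒜.Obj} (c : ℂ) (f : 𝒜.Hom x y), F (c • f) = c • F f
  map_star : ∀ {x y : 𝒜.Obj} (f : 𝒜.Hom x y), F (𝒜.star f) = Star.star (F f)
  map_comp : ∀ {x y z : 𝒜.Obj} (g : 𝒜.Hom y z) (f : 𝒜.Hom x y),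
    F (𝒜.comp g f) = F g * F f

open scoped Classical in
/-- The *-homomorphism `C*₀F : C*₀𝒜 → B` induced by a C*-functor `F : 𝒜 → B` which kills
products of non-composable morphisms. -/
noncomputable def c0Map {B : Type*} [NonUnitalCStarAlgebra B]
    (F : ∀ {x y : 𝒜.Obj}, 𝒜.Hom x y → B) (a : 𝒜.C0) : B :=
  DFinsupp.sum a fun _ f => F f

/-- The norm of the enveloping C*-algebra `C*𝒜` on the dense *-subalgebra `C*₀𝒜`:
the supremum of all C*-seminorms on `C*₀𝒜` (which is finite). -/
noncomputable def envNorm (a : 𝒜.C0) : ℝ :=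
  sSup {r : ℝ | ∃ ρ : 𝒜.C0 → ℝ, 𝒜.IsCStarSeminorm ρ ∧ r = ρ a}

end CStarCategory


namespace CStarCatProofAux

noncomputable def ff : ℂ → ℂ := fun z => (z.re : ℂ) + (Real.sqrt (1 - z.re ^ 2) : ℝ) * Complex.I

lemma ff_cont : Continuous ff := by unfold ff; fun_prop

lemma ff_star (z : ℂ) : star (ff z) = (z.re : ℂ) - (Real.sqrt (1 - z.re ^ 2) : ℝ) * Complex.I := by
  unfold ff
  rw [star_add, star_mul]
  simp only [RCLike.star_def, Complex.conj_ofReal, Complex.conj_I]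
  ring

section Unital

variable {A : Type*} [CStarAlgebra A] [Nontrivial A]

lemma unitary_decomp {a : A} (ha : IsSelfAdjoint a) (h1 : ‖a‖ ≤ 1) :
    star (cfc ff a) * cfc ff a = 1 ∧ cfc ff a * star (cfc ff a) = 1 ∧
      cfc ff a + star (cfc ff a) = (2:ℂ) • a := by
  haveI hn : IsStarNormal a := ha.isStarNormal
  have hspec : ∀ z ∈ spectrum ℂ a, z = (z.re : ℂ) ∧ z.re ^ 2 ≤ 1 := by
    intro z hz
    have hre := ha.mem_spectrum_eq_re hz
    refine ⟨hre, ?_⟩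
    have h0 : ‖z‖ ≤ ‖a‖ := spectrum.norm_le_norm_of_mem hz
    have h2 : |z.re| ≤ ‖z‖ := Complex.abs_re_le_norm z
    nlinarith [abs_nonneg z.re, sq_abs z.re]
  have hmul : ∀ z ∈ spectrum ℂ a, star (ff z) * ff z = 1 := by
    intro z hz
    obtain ⟨hre, hsq⟩ := hspec z hz
    have hs : ((Real.sqrt (1 - z.re ^ 2) : ℝ) : ℂ) ^ 2 = ((1 - z.re ^ 2 : ℝ) : ℂ) := by
      rw [← Complex.ofReal_pow, Real.sq_sqrt (by linarith)]
    rw [ff_star]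
    unfold ff
    push_cast at hs ⊢
    linear_combination (-(((Real.sqrt (1 - z.re ^ 2) : ℝ) : ℂ))^2) * Complex.I_sq + hs
  have hcont : ContinuousOn ff (spectrum ℂ a) := ff_cont.continuousOn
  have hconts : ContinuousOn (fun z => star (ff z)) (spectrum ℂ a) :=
    (continuous_star.comp ff_cont).continuousOn
  refine ⟨?_, ?_, ?_⟩
  · rw [← cfc_star, ← cfc_mul _ _ a hconts hcont]
    calc cfc (fun z => star (ff z) * ff z) a = cfc (fun _ : ℂ => (1:ℂ)) a := cfc_congr hmul
    _ = 1 := cfc_const_one ℂ a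
  · rw [← cfc_star, ← cfc_mul _ _ a hcont hconts]
    have hmul' : ∀ z ∈ spectrum ℂ a, ff z * star (ff z) = 1 := fun z hz => by
      rw [mul_comm]; exact hmul z hz
    calc cfc (fun z => ff z * star (ff z)) a = cfc (fun _ : ℂ => (1:ℂ)) a := cfc_congr hmul'
    _ = 1 := cfc_const_one ℂ a
  · rw [← cfc_star, ← cfc_add a _ _ hcont hconts]
    have h2 : ∀ z ∈ spectrum ℂ a, ff z + star (ff z) = (2:ℂ) • z := by
      intro z hz
      obtain ⟨hre, _⟩ := hspec z hz
      rw [ff_star]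
      unfold ff
      rw [smul_eq_mul]
      linear_combination -2*hre
    calc cfc (fun z => ff z + star (ff z)) a = cfc (fun z : ℂ => (2:ℂ) • z) a := cfc_congr h2
    _ = (2:ℂ) • cfc (fun z : ℂ => z) a := cfc_smul (2:ℂ) (fun z : ℂ => z) a continuousOn_id
    _ = (2:ℂ) • a := by rw [cfc_id' ℂ a]

lemma cstarSeminorm_le_norm_unital (ρ : A → ℝ)
    (h1 : ∀ a, 0 ≤ ρ a) (h2 : ∀ a b, ρ (a + b) ≤ ρ a + ρ b)
    (h3 : ∀ (c : ℂ) (a : A), ρ (c • a) = ‖c‖ * ρ a)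
    (h4 : ∀ a b, ρ (a * b) ≤ ρ a * ρ b)
    (h5 : ∀ a, ρ (star a * a) = ρ a ^ 2) (a : A) : ρ a ≤ ‖a‖ := by
  have hzero : ρ (0 : A) = 0 := by
    have := h3 0 0
    simpa using this
  have hstar : ∀ x : A, ρ (star x) = ρ x := by
    have key : ∀ x : A, ρ x ≤ ρ (star x) := by
      intro x
      rcases (h1 x).eq_or_lt with h | h
      · rw [← h]; exact h1 _
      · have h6 := h5 x
        have h7 := h4 (star x) x
        nlinarith
    intro x
    have h8 := key (star x)
    rw [star_star] at h8
    exact le_antisymm h8 (key x)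
  by_cases hone : ρ 1 = 0
  · have h9 := h4 a 1
    rw [mul_one, hone, mul_zero] at h9
    exact h9.trans (norm_nonneg a)
  have hone1 : ρ 1 = 1 := by
    have h9 := h5 1
    rw [star_one, one_mul] at h9
    have : ρ 1 * (ρ 1 - 1) = 0 := by nlinarith
    rcases mul_eq_zero.mp this with h | h
    · exact absurd h hone
    · linarith
  have hu : ∀ u : A, star u * u = 1 → ρ u ≤ 1 := by
    intro u h
    have h9 := h5 u
    rw [h, hone1] at h9
    nlinarith [h1 u]
  have hsa1 : ∀ x : A, IsSelfAdjoint x → ‖x‖ ≤ 1 → ρ x ≤ 1 := by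
    intro x hx hx1
    obtain ⟨k1, _k2, k3⟩ := unitary_decomp hx hx1
    set u := cfc ff x with hudef
    have hxeq : x = (2⁻¹ : ℂ) • (u + star u) := by
      rw [k3, smul_smul]
      norm_num
    have hru : ρ u ≤ 1 := hu u k1
    have hrsu : ρ (star u) ≤ 1 := by rw [hstar]; exact hru
    have hn2 : ‖(2⁻¹ : ℂ)‖ = 2⁻¹ := by
      rw [norm_inv]
      norm_num
    calc ρ x = ‖(2⁻¹ : ℂ)‖ * ρ (u + star u) := by rw [← h3, ← hxeq]
    _ ≤ 2⁻¹ * (ρ u + ρ (star u)) := by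
        rw [hn2]
        have := h2 u (star u)
        nlinarith [h1 (u + star u)]
    _ ≤ 1 := by nlinarith
  have hsa : ∀ x : A, IsSelfAdjoint x → ρ x ≤ ‖x‖ := by
    intro x hx
    rcases eq_or_ne x 0 with rfl | hx0
    · rw [hzero, norm_zero]
    · have hpos : 0 < ‖x‖ := norm_pos_iff.mpr hx0
      have hsa' : IsSelfAdjoint (((‖x‖⁻¹ : ℝ) : ℂ) • x) :=
        IsSelfAdjoint.smul (r := ((‖x‖⁻¹ : ℝ) : ℂ))
          (by simp [IsSelfAdjoint, RCLike.star_def, Complex.conj_ofReal]) hx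
      have hn : ‖(((‖x‖⁻¹ : ℝ) : ℂ)) • x‖ ≤ 1 := by
        rw [norm_smul, Complex.norm_real, Real.norm_eq_abs, abs_of_pos (by positivity)]
        rw [inv_mul_cancel₀ hpos.ne']
      have h9 := hsa1 _ hsa' hn
      rw [h3, Complex.norm_real, Real.norm_eq_abs, abs_of_pos (by positivity)] at h9
      calc ρ x = ‖x‖ * (‖x‖⁻¹ * ρ x) := by field_simp
      _ ≤ ‖x‖ * 1 := by nlinarith
      _ = ‖x‖ := mul_one _
  have h6 := h5 a
  have h7 := hsa (star a * a) (IsSelfAdjoint.star_mul_self a)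
  have h8 : ‖star a * a‖ = ‖a‖ * ‖a‖ := CStarRing.norm_star_mul_self
  nlinarith [h1 a, norm_nonneg a]

end Unital

section NonUnital


variable {A : Type*} [NonUnitalCStarAlgebra A]

lemma cstarSeminorm_le_norm (ρ : A → ℝ)
    (h1 : ∀ a, 0 ≤ ρ a) (h2 : ∀ a b, ρ (a + b) ≤ ρ a + ρ b)
    (h3 : ∀ (c : ℂ) (a : A), ρ (c • a) = ‖c‖ * ρ a)
    (h4 : ∀ a b, ρ (a * b) ≤ ρ a * ρ b)
    (h5 : ∀ a, ρ (star a * a) = ρ a ^ 2) (a : A) : ρ a ≤ ‖a‖ := by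
  have hzero : ρ (0 : A) = 0 := by simpa using h3 0 0
  have hstar : ∀ x : A, ρ (star x) = ρ x := by
    have key : ∀ x : A, ρ x ≤ ρ (star x) := by
      intro x
      rcases (h1 x).eq_or_lt with h | h
      · rw [← h]; exact h1 _
      · have h6 := h5 x
        have h7 := h4 (star x) x
        nlinarith
    intro x
    have h8 := key (star x); rw [star_star] at h8
    exact le_antisymm h8 (key x)
  by_cases ha0 : ρ a = 0
  · rw [ha0]; exact norm_nonneg a
  have hapos : 0 < ρ a := (h1 a).lt_of_ne (Ne.symm ha0)
  set act : Unitization ℂ A → A → A := fun x b => x.fst • b + x.snd * b with hact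
  have act_zero : ∀ x, act x 0 = 0 := by intro x; simp [hact]
  have act_smulb : ∀ (x) (c : ℂ) (b), act x (c • b) = c • act x b := by
    intro x c b; simp [hact, mul_smul_comm, smul_add, smul_smul, mul_comm]
  have act_mul : ∀ x y b, act (x * y) b = act x (act y b) := by
    intro x y b
    simp only [hact, Unitization.fst_mul, Unitization.snd_mul]
    simp only [add_mul, smul_mul_assoc, mul_smul_comm, smul_add, mul_add, smul_smul, mul_assoc]
    abel
  have act_star : ∀ x b, star (act x b) * act x b = star b * act (star x * x) b := by
    intro x b
    simp only [hact, Unitization.fst_mul, Unitization.snd_mul, Unitization.fst_star,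
      Unitization.snd_star]
    simp only [star_add, star_smul, star_mul]
    simp only [add_mul, mul_add, smul_mul_assoc, mul_smul_comm, smul_add, smul_smul, mul_assoc,
      RCLike.star_def, Complex.mul_conj, mul_comm]
    abel
  have act_inr : ∀ b : A, act (a : Unitization ℂ A) b = a * b := by
    intro b; simp [hact]
  have hbound : ∀ x b, ρ (act x b) ≤ (‖x.fst‖ + ρ x.snd) * ρ b := by
    intro x b
    calc ρ (act x b) ≤ ρ (x.fst • b) + ρ (x.snd * b) := h2 _ _
    _ ≤ ‖x.fst‖ * ρ b + ρ x.snd * ρ b := by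
        rw [h3 x.fst b]
        exact add_le_add le_rfl (h4 _ _)
    _ = (‖x.fst‖ + ρ x.snd) * ρ b := by ring
  set S : Unitization ℂ A → Set ℝ := fun x => {r | ∃ b : A, ρ b ≤ 1 ∧ r = ρ (act x b)} with hS
  have hmem0 : ∀ x, (0:ℝ) ∈ S x :=
    fun x => ⟨0, by rw [hzero]; exact zero_le_one, by rw [act_zero, hzero]⟩
  have hne : ∀ x, (S x).Nonempty := fun x => ⟨0, hmem0 x⟩
  have hbdd : ∀ x, BddAbove (S x) := by
    intro x
    refine ⟨‖x.fst‖ + ρ x.snd, ?_⟩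
    rintro r ⟨b, hb, rfl⟩
    calc ρ (act x b) ≤ (‖x.fst‖ + ρ x.snd) * ρ b := hbound x b
    _ ≤ (‖x.fst‖ + ρ x.snd) * 1 :=
        mul_le_mul_of_nonneg_left hb (by have := h1 x.snd; positivity)
    _ = _ := mul_one _
  set τ : Unitization ℂ A → ℝ := fun x => sSup (S x) with hτ
  have τ_nonneg : ∀ x, 0 ≤ τ x := fun x => le_csSup (hbdd x) (hmem0 x)
  have τ_mem_le : ∀ x b, ρ b ≤ 1 → ρ (act x b) ≤ τ x := by
    intro x b hb
    exact le_csSup (hbdd x) ⟨b, hb, rfl⟩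
  have key_le : ∀ x b, ρ (act x b) ≤ τ x * ρ b := by
    intro x b
    rcases (h1 b).eq_or_lt with hb | hb
    · have h6 := hbound x b
      rw [← hb, mul_zero] at h6 ⊢
      exact h6
    · have hb1 : ρ ((((ρ b)⁻¹ : ℝ) : ℂ) • b) = 1 := by
        rw [h3, Complex.norm_real, Real.norm_eq_abs, abs_of_pos (by positivity),
          inv_mul_cancel₀ hb.ne']
      have h6 := τ_mem_le x _ hb1.le
      rw [act_smulb, h3, Complex.norm_real, Real.norm_eq_abs, abs_of_pos (by positivity)] at h6
      calc ρ (act x b) = ρ b * ((ρ b)⁻¹ * ρ (act x b)) := by field_simp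
      _ ≤ ρ b * τ x := mul_le_mul_of_nonneg_left h6 hb.le
      _ = τ x * ρ b := mul_comm _ _
  have τ_mul : ∀ x y, τ (x * y) ≤ τ x * τ y := by
    intro x y
    apply csSup_le (hne _)
    rintro r ⟨b, hb, rfl⟩
    rw [act_mul]
    calc ρ (act x (act y b)) ≤ τ x * ρ (act y b) := key_le _ _
    _ ≤ τ x * (τ y * ρ b) := mul_le_mul_of_nonneg_left (key_le _ _) (τ_nonneg x)
    _ ≤ τ x * (τ y * 1) := by
        apply mul_le_mul_of_nonneg_left _ (τ_nonneg x)
        exact mul_le_mul_of_nonneg_left hb (τ_nonneg y)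
    _ = τ x * τ y := by ring
  have τ_add : ∀ x y, τ (x + y) ≤ τ x + τ y := by
    intro x y
    apply csSup_le (hne _)
    rintro r ⟨b, hb, rfl⟩
    have hsplit : act (x + y) b = act x b + act y b := by
      simp [hact, add_smul, add_mul]; abel
    rw [hsplit]
    calc ρ (act x b + act y b) ≤ ρ (act x b) + ρ (act y b) := h2 _ _
    _ ≤ τ x + τ y := add_le_add (τ_mem_le x b hb) (τ_mem_le y b hb)
  have τ_smul_le : ∀ (c : ℂ) x, τ (c • x) ≤ ‖c‖ * τ x := by
    intro c x
    apply csSup_le (hne _)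
    rintro r ⟨b, hb, rfl⟩
    have hsm : act (c • x) b = c • act x b := by
      simp [hact, smul_add, smul_smul, smul_mul_assoc, Unitization.fst_smul, Unitization.snd_smul,
        smul_assoc]
    rw [hsm, h3]
    exact mul_le_mul_of_nonneg_left (τ_mem_le x b hb) (norm_nonneg c)
  have τ_smul : ∀ (c : ℂ) x, τ (c • x) = ‖c‖ * τ x := by
    intro c x
    rcases eq_or_ne c 0 with rfl | hc
    · have h6 : τ ((0:ℂ) • x) ≤ 0 := by simpa using τ_smul_le 0 x
      have h7 := τ_nonneg ((0:ℂ) • x)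
      rw [le_antisymm h6 h7, norm_zero, zero_mul]
    · refine le_antisymm (τ_smul_le c x) ?_
      have h6 := τ_smul_le c⁻¹ (c • x)
      rw [smul_smul, inv_mul_cancel₀ hc, one_smul] at h6
      have h7 : ‖c‖ * τ x ≤ ‖c‖ * (‖c⁻¹‖ * τ (c • x)) :=
        mul_le_mul_of_nonneg_left h6 (norm_nonneg c)
      rw [norm_inv] at h7
      calc ‖c‖ * τ x ≤ ‖c‖ * (‖c‖⁻¹ * τ (c • x)) := h7
      _ = τ (c • x) := by
          rw [← mul_assoc, mul_inv_cancel₀ (norm_ne_zero_iff.mpr hc), one_mul]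
  have part1 : ∀ x, τ x ^ 2 ≤ τ (star x * x) := by
    intro x
    have hsq : τ x ≤ Real.sqrt (τ (star x * x)) := by
      apply csSup_le (hne _)
      rintro r ⟨b, hb, rfl⟩
      rw [Real.le_sqrt (h1 _)]
      · calc ρ (act x b) ^ 2 = ρ (star (act x b) * act x b) := (h5 _).symm
        _ = ρ (star b * act (star x * x) b) := by rw [act_star]
        _ ≤ ρ (star b) * ρ (act (star x * x) b) := h4 _ _
        _ ≤ 1 * (τ (star x * x) * ρ b) := by
            apply mul_le_mul _ (key_le _ _) (h1 _) zero_le_one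
            rw [hstar]; exact hb
        _ ≤ 1 * (τ (star x * x) * 1) := by
            apply mul_le_mul_of_nonneg_left _ zero_le_one
            exact mul_le_mul_of_nonneg_left hb (τ_nonneg _)
        _ = τ (star x * x) := by ring
      · exact τ_nonneg _
    have h6 := Real.sq_sqrt (τ_nonneg (star x * x))
    nlinarith [Real.sqrt_nonneg (τ (star x * x)), τ_nonneg x]
  have τ_star : ∀ y, τ (star y) = τ y := by
    have τ_star_le : ∀ y, τ y ≤ τ (star y) := by
      intro y
      rcases (τ_nonneg y).eq_or_lt with h | h
      · rw [← h]; exact τ_nonneg _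
      · have h6 : τ y ^ 2 ≤ τ (star y) * τ y := (part1 y).trans (τ_mul (star y) y)
        nlinarith
    intro y
    have h7 := τ_star_le (star y)
    rw [star_star] at h7
    exact le_antisymm h7 (τ_star_le y)
  have τ_cstar : ∀ x, τ (star x * x) = τ x ^ 2 := by
    intro x
    refine le_antisymm ?_ (part1 x)
    calc τ (star x * x) ≤ τ (star x) * τ x := τ_mul _ _
    _ = τ x ^ 2 := by rw [τ_star]; ring
  have τ_le_norm := cstarSeminorm_le_norm_unital τ τ_nonneg τ_add τ_smul τ_mul τ_cstar
  have hfinal : ρ a ≤ τ (a : Unitization ℂ A) := by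
    have hb1 : ρ ((((ρ a)⁻¹ : ℝ) : ℂ) • star a) = 1 := by
      rw [h3, hstar, Complex.norm_real, Real.norm_eq_abs, abs_of_pos (by positivity),
        inv_mul_cancel₀ ha0]
    have h8 := τ_mem_le (a : Unitization ℂ A) _ hb1.le
    rw [act_inr, mul_smul_comm, h3, Complex.norm_real, Real.norm_eq_abs,
      abs_of_pos (by positivity)] at h8
    have h9 : ρ (a * star a) = ρ a ^ 2 := by
      have := h5 (star a)
      rwa [star_star, hstar] at this
    rw [h9] at h8
    calc ρ a = (ρ a)⁻¹ * ρ a ^ 2 := by field_simp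
    _ ≤ τ (a : Unitization ℂ A) := h8
  calc ρ a ≤ τ (a : Unitization ℂ A) := hfinal
  _ ≤ ‖(a : Unitization ℂ A)‖ := τ_le_norm _
  _ = ‖a‖ := Unitization.norm_inr a

end NonUnital
end CStarCatProofAux

namespace CStarCatProofAux

open scoped Classical

section Cat

variable (𝒜 : CStarCategory) {B : Type*} [NonUnitalCStarAlgebra B]
  (F : ∀ {x y : 𝒜.Obj}, 𝒜.Hom x y → B)

lemma star_zero' (x y : 𝒜.Obj) : 𝒜.star (0 : 𝒜.Hom x y) = 0 := by
  have := 𝒜.star_smul 0 (0 : 𝒜.Hom x y)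
  simpa using this

lemma comp_zero' (x y z : 𝒜.Obj) (g : 𝒜.Hom y z) : 𝒜.comp g (0 : 𝒜.Hom x y) = 0 := by
  have := 𝒜.comp_smul 0 g (0 : 𝒜.Hom x y)
  simpa using this

lemma zero_comp' (x y z : 𝒜.Obj) (f : 𝒜.Hom x y) : 𝒜.comp (0 : 𝒜.Hom y z) f = 0 := by
  have := 𝒜.smul_comp 0 (0 : 𝒜.Hom y z) f
  simpa using this

variable (hF : 𝒜.IsCStarFunctorTo F)

include hF in
lemma F_zero (x y : 𝒜.Obj) : F (0 : 𝒜.Hom x y) = 0 := by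
  have := hF.map_smul 0 (0 : 𝒜.Hom x y)
  simpa using this

include hF in
lemma c0Map_single (p : 𝒜.Obj × 𝒜.Obj) (f : 𝒜.Hom p.1 p.2) :
    𝒜.c0Map F (DFinsupp.single p f) = F f := by
  rw [CStarCategory.c0Map]
  exact DFinsupp.sum_single_index (F_zero 𝒜 F hF p.1 p.2)

include hF in
lemma c0Map_add (a b : 𝒜.C0) : 𝒜.c0Map F (a + b) = 𝒜.c0Map F a + 𝒜.c0Map F b := by
  rw [CStarCategory.c0Map, CStarCategory.c0Map, CStarCategory.c0Map]
  exact DFinsupp.sum_add_index (fun p => F_zero 𝒜 F hF p.1 p.2) (fun p => hF.map_add)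

lemma c0Map_zero : 𝒜.c0Map F (0 : 𝒜.C0) = 0 := by
  rw [CStarCategory.c0Map]
  exact DFinsupp.sum_zero_index

include hF in
lemma c0Map_smul (c : ℂ) (a : 𝒜.C0) : 𝒜.c0Map F (c • a) = c • 𝒜.c0Map F a := by
  induction a using DFinsupp.induction with
  | h0 => rw [smul_zero, c0Map_zero, smul_zero]
  | ha p f rest hfr hf ih =>
    rw [smul_add, c0Map_add 𝒜 F hF, ← DFinsupp.single_smul, c0Map_add 𝒜 F hF,
      c0Map_single 𝒜 F hF, c0Map_single 𝒜 F hF, ih, hF.map_smul, smul_add]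

lemma c0Star_single (p : 𝒜.Obj × 𝒜.Obj) (f : 𝒜.Hom p.1 p.2) :
    𝒜.c0Star (DFinsupp.single p f) = DFinsupp.single (p.2, p.1) (𝒜.star f) := by
  rw [CStarCategory.c0Star]
  refine DFinsupp.sum_single_index ?_
  rw [star_zero' 𝒜]
  exact DFinsupp.single_zero _

lemma c0Star_zero : 𝒜.c0Star (0 : 𝒜.C0) = 0 := by
  rw [CStarCategory.c0Star]
  exact DFinsupp.sum_zero_index

lemma c0Star_add (a b : 𝒜.C0) : 𝒜.c0Star (a + b) = 𝒜.c0Star a + 𝒜.c0Star b := by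
  rw [CStarCategory.c0Star, CStarCategory.c0Star, CStarCategory.c0Star]
  refine DFinsupp.sum_add_index (fun p => ?_) (fun p f g => ?_)
  · rw [star_zero' 𝒜]
    exact DFinsupp.single_zero _
  · rw [𝒜.star_add, DFinsupp.single_add]

include hF in
lemma c0Map_star (a : 𝒜.C0) : 𝒜.c0Map F (𝒜.c0Star a) = star (𝒜.c0Map F a) := by
  induction a using DFinsupp.induction with
  | h0 => rw [c0Star_zero, c0Map_zero, star_zero]
  | ha p f rest hfr hf ih =>
    rw [c0Star_add 𝒜, c0Map_add 𝒜 F hF, c0Map_add 𝒜 F hF, c0Star_single 𝒜,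
      c0Map_single 𝒜 F hF, c0Map_single 𝒜 F hF, ih, hF.map_star, star_add]

lemma c0Mul_zero_left (b : 𝒜.C0) : 𝒜.c0Mul 0 b = 0 := by
  rw [CStarCategory.c0Mul]
  exact DFinsupp.sum_zero_index

lemma c0Mul_zero_right (a : 𝒜.C0) : 𝒜.c0Mul a 0 = 0 := by
  rw [CStarCategory.c0Mul]
  simp only [DFinsupp.sum_zero_index]
  exact DFinsupp.sum_zero

lemma c0Mul_inner_zero (p : 𝒜.Obj × 𝒜.Obj) (b : 𝒜.C0) :
    (DFinsupp.sum b (fun q g =>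
      if h : q.2 = p.1 then DFinsupp.single (q.1, p.2) (𝒜.comp 0 (h ▸ g)) else 0) : 𝒜.C0) = 0 := by
  unfold DFinsupp.sum
  refine Finset.sum_eq_zero fun q hq => ?_
  dsimp only
  split_ifs with h
  · rw [zero_comp' 𝒜]
    exact DFinsupp.single_zero _
  · rfl

lemma c0Mul_single_left (p : 𝒜.Obj × 𝒜.Obj) (f : 𝒜.Hom p.1 p.2) (b : 𝒜.C0) :
    𝒜.c0Mul (DFinsupp.single p f) b = (DFinsupp.sum b (fun q g =>
      if h : q.2 = p.1 then DFinsupp.single (q.1, p.2) (𝒜.comp f (h ▸ g)) else 0) : 𝒜.C0) := by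
  rw [CStarCategory.c0Mul]
  exact DFinsupp.sum_single_index (c0Mul_inner_zero 𝒜 p b)

lemma c0Mul_single_single (p q : 𝒜.Obj × 𝒜.Obj) (f : 𝒜.Hom p.1 p.2) (g : 𝒜.Hom q.1 q.2) :
    𝒜.c0Mul (DFinsupp.single p f) (DFinsupp.single q g) =
      if h : q.2 = p.1 then DFinsupp.single (q.1, p.2) (𝒜.comp f (h ▸ g)) else 0 := by
  rw [c0Mul_single_left 𝒜]
  refine DFinsupp.sum_single_index ?_
  obtain ⟨q1, q2⟩ := q
  dsimp only
  split_ifs with h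
  · subst h
    rw [comp_zero' 𝒜]
    exact DFinsupp.single_zero _
  · rfl

lemma c0Mul_add_left (a a' b : 𝒜.C0) :
    𝒜.c0Mul (a + a') b = 𝒜.c0Mul a b + 𝒜.c0Mul a' b := by
  rw [CStarCategory.c0Mul, CStarCategory.c0Mul, CStarCategory.c0Mul]
  refine DFinsupp.sum_add_index (fun p => c0Mul_inner_zero 𝒜 p b) (fun p f f' => ?_)
  rw [← DFinsupp.sum_add]
  congr 1
  funext q g
  split_ifs with h
  · rw [𝒜.add_comp, DFinsupp.single_add]
  · rw [add_zero]

lemma c0Mul_add_right (a b b' : 𝒜.C0) :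
    𝒜.c0Mul a (b + b') = 𝒜.c0Mul a b + 𝒜.c0Mul a b' := by
  rw [CStarCategory.c0Mul, CStarCategory.c0Mul, CStarCategory.c0Mul]
  rw [← DFinsupp.sum_add]
  congr 1
  funext p f
  refine DFinsupp.sum_add_index (fun q => ?_) (fun q g g' => ?_)
  · obtain ⟨q1, q2⟩ := q
    dsimp only
    split_ifs with h
    · subst h
      rw [comp_zero' 𝒜]
      exact DFinsupp.single_zero _
    · rfl
  · obtain ⟨q1, q2⟩ := q
    dsimp only
    split_ifs with h
    · subst h
      rw [𝒜.comp_add, DFinsupp.single_add]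
    · rw [add_zero]

variable (horth : ∀ {x y z w : 𝒜.Obj} (f : 𝒜.Hom y z) (g : 𝒜.Hom x w),
      w ≠ y → F f * F g = 0)

include hF horth in
lemma c0Map_mul_single (p : 𝒜.Obj × 𝒜.Obj) (f : 𝒜.Hom p.1 p.2) (b : 𝒜.C0) :
    𝒜.c0Map F (𝒜.c0Mul (DFinsupp.single p f) b) = F f * 𝒜.c0Map F b := by
  induction b using DFinsupp.induction with
  | h0 => rw [c0Mul_zero_right 𝒜, c0Map_zero, mul_zero]
  | ha q g rest' hfr' hg ih' =>
    rw [c0Mul_add_right 𝒜, c0Map_add 𝒜 F hF, c0Map_add 𝒜 F hF, ih', mul_add,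
      c0Map_single 𝒜 F hF, c0Mul_single_single 𝒜]
    congr 1
    obtain ⟨q1, q2⟩ := q
    dsimp only
    split_ifs with h
    · subst h
      rw [c0Map_single 𝒜 F hF, hF.map_comp]
    · rw [c0Map_zero, horth f g h]

include hF horth in
lemma c0Map_mul (a b : 𝒜.C0) :
    𝒜.c0Map F (𝒜.c0Mul a b) = 𝒜.c0Map F a * 𝒜.c0Map F b := by
  induction a using DFinsupp.induction with
  | h0 => rw [c0Mul_zero_left 𝒜, c0Map_zero, zero_mul]
  | ha p f rest hfr hf ih =>
    rw [c0Mul_add_left 𝒜, c0Map_add 𝒜 F hF, c0Map_add 𝒜 F hF, ih, add_mul,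
      c0Map_single 𝒜 F hF, c0Map_mul_single 𝒜 F hF horth]

end Cat

section Pos

variable {B : Type*} [NonUnitalCStarAlgebra B]

lemma norm_star_mul_le_add (x y : B) : ‖star x * x‖ ≤ ‖star x * x + star y * y‖ := by
  letI := CStarAlgebra.spectralOrder (Unitization ℂ B)
  haveI := CStarAlgebra.spectralOrderedRing (Unitization ℂ B)
  have h1 : (0 : Unitization ℂ B) ≤ star (x : Unitization ℂ B) * x := star_mul_self_nonneg _
  have h2 : star (x : Unitization ℂ B) * x ≤
      star (x : Unitization ℂ B) * x + star (y : Unitization ℂ B) * y :=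
    le_add_of_nonneg_right (star_mul_self_nonneg _)
  have h3 := CStarAlgebra.norm_le_norm_of_nonneg_of_le h1 h2
  rw [← Unitization.inr_star, ← Unitization.inr_star, ← Unitization.inr_mul, ← Unitization.inr_mul,
    ← Unitization.inr_add, Unitization.norm_inr, Unitization.norm_inr] at h3
  exact h3

lemma norm_mul_star_le_add (x y : B) : ‖x * star x‖ ≤ ‖x * star x + y * star y‖ := by
  have := norm_star_mul_le_add (star x) (star y)
  rwa [star_star, star_star] at this

end Pos

section Cat2

variable (𝒜 : CStarCategory) {B : Type*} [NonUnitalCStarAlgebra B]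
  (F : ∀ {x y : 𝒜.Obj}, 𝒜.Hom x y → B)
  (hF : 𝒜.IsCStarFunctorTo F)
  (horth : ∀ {x y z w : 𝒜.Obj} (f : 𝒜.Hom y z) (g : 𝒜.Hom x w),
      w ≠ y → F f * F g = 0)
  (hiso : ∀ {x y : 𝒜.Obj} (f : 𝒜.Hom x y), ‖F f‖ = ‖f‖)

lemma c0Map_eq_sum (b : 𝒜.C0) : 𝒜.c0Map F b = ∑ p ∈ b.support, F (b p) := rfl

include hF horth in
lemma c0Map_mul_star_eq_zero (b c : 𝒜.C0)
    (h : ∀ p ∈ b.support, ∀ q ∈ c.support,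
      (p : 𝒜.Obj × 𝒜.Obj).1 ≠ (q : 𝒜.Obj × 𝒜.Obj).1) :
    𝒜.c0Map F b * star (𝒜.c0Map F c) = 0 := by
  rw [c0Map_eq_sum 𝒜, c0Map_eq_sum 𝒜, star_sum, Finset.sum_mul_sum]
  refine Finset.sum_eq_zero fun p hp => Finset.sum_eq_zero fun q hq => ?_
  rw [← hF.map_star]
  exact horth (b p) (𝒜.star (c q)) (h p hp q hq).symm

include hF horth in
lemma c0Map_star_mul_eq_zero (b c : 𝒜.C0)
    (h : ∀ p ∈ b.support, ∀ q ∈ c.support,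
      (p : 𝒜.Obj × 𝒜.Obj).2 ≠ (q : 𝒜.Obj × 𝒜.Obj).2) :
    star (𝒜.c0Map F b) * 𝒜.c0Map F c = 0 := by
  rw [c0Map_eq_sum 𝒜, c0Map_eq_sum 𝒜, star_sum, Finset.sum_mul_sum]
  refine Finset.sum_eq_zero fun p hp => Finset.sum_eq_zero fun q hq => ?_
  rw [← hF.map_star]
  exact horth (𝒜.star (b p)) (c q) (h p hp q hq).symm

lemma filter_add_filter_neg' (b : 𝒜.C0) (pr : 𝒜.Obj × 𝒜.Obj → Prop) :
    b.filter pr + b.filter (fun q => ¬ pr q) = b := by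
  ext q
  rw [DFinsupp.add_apply, DFinsupp.filter_apply, DFinsupp.filter_apply]
  by_cases h : pr q <;> simp [h]

lemma mem_filter_support {b : 𝒜.C0} {pr : 𝒜.Obj × 𝒜.Obj → Prop} [DecidablePred pr]
    {q : 𝒜.Obj × 𝒜.Obj} (hq : q ∈ (b.filter pr).support) : pr q := by
  rw [DFinsupp.support_filter, Finset.mem_filter] at hq
  exact hq.2

include hF horth in
lemma norm_filter_fst_le (b : 𝒜.C0) (o : 𝒜.Obj) :
    ‖𝒜.c0Map F (b.filter (fun q => q.1 = o))‖ ≤ ‖𝒜.c0Map F b‖ := by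
  set bR := b.filter (fun q => q.1 = o) with hbR
  set bE := b.filter (fun q => ¬ q.1 = o) with hbE
  have hsplit : bR + bE = b := filter_add_filter_neg' 𝒜 b _
  have hRE : 𝒜.c0Map F bE * star (𝒜.c0Map F bR) = 0 := by
    refine c0Map_mul_star_eq_zero 𝒜 F hF horth _ _ fun r hr q hq => ?_
    rw [hbE] at hr
    rw [hbR] at hq
    have h1 := mem_filter_support 𝒜 hr
    have h2 := mem_filter_support 𝒜 hq
    rw [h2]
    exact h1
  have hER : 𝒜.c0Map F bR * star (𝒜.c0Map F bE) = 0 := by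
    refine c0Map_mul_star_eq_zero 𝒜 F hF horth _ _ fun r hr q hq => ?_
    rw [hbR] at hr
    rw [hbE] at hq
    have h1 := mem_filter_support 𝒜 hr
    have h2 := mem_filter_support 𝒜 hq
    rw [h1]
    exact fun hc => h2 hc.symm
  have e1 : 𝒜.c0Map F b = 𝒜.c0Map F bR + 𝒜.c0Map F bE := by
    rw [← hsplit, c0Map_add 𝒜 F hF]
  have e2 : 𝒜.c0Map F b * star (𝒜.c0Map F b) =
      𝒜.c0Map F bR * star (𝒜.c0Map F bR) + 𝒜.c0Map F bE * star (𝒜.c0Map F bE) := by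
    rw [e1, star_add, add_mul, mul_add, mul_add, hER, hRE]
    simp only [add_zero, zero_add]
  have hsq : ‖𝒜.c0Map F bR‖ ^ 2 ≤ ‖𝒜.c0Map F b‖ ^ 2 := by
    calc ‖𝒜.c0Map F bR‖ ^ 2 = ‖𝒜.c0Map F bR * star (𝒜.c0Map F bR)‖ := by
          rw [CStarRing.norm_self_mul_star]; ring
    _ ≤ ‖𝒜.c0Map F bR * star (𝒜.c0Map F bR) + 𝒜.c0Map F bE * star (𝒜.c0Map F bE)‖ :=
          norm_mul_star_le_add _ _
    _ = ‖𝒜.c0Map F b * star (𝒜.c0Map F b)‖ := by rw [e2]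
    _ = ‖𝒜.c0Map F b‖ ^ 2 := by rw [CStarRing.norm_self_mul_star]; ring
  nlinarith [norm_nonneg (𝒜.c0Map F b), norm_nonneg (𝒜.c0Map F bR)]

include hF horth hiso in
lemma entry_norm_le (b : 𝒜.C0) (p : 𝒜.Obj × 𝒜.Obj) : ‖b p‖ ≤ ‖𝒜.c0Map F b‖ := by
  by_cases hp : b p = 0
  · rw [hp, norm_zero]
    exact norm_nonneg _
  set bR := b.filter (fun q => q.1 = p.1) with hbR
  have step1 : ‖𝒜.c0Map F bR‖ ≤ ‖𝒜.c0Map F b‖ := norm_filter_fst_le 𝒜 F hF horth b p.1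
  set bP := bR.filter (fun q => q.2 = p.2) with hbP
  set bE' := bR.filter (fun q => ¬ q.2 = p.2) with hbE'
  have hsplit : bP + bE' = bR := filter_add_filter_neg' 𝒜 bR _
  have hPE : star (𝒜.c0Map F bP) * 𝒜.c0Map F bE' = 0 := by
    refine c0Map_star_mul_eq_zero 𝒜 F hF horth _ _ fun r hr q hq => ?_
    rw [hbP] at hr
    rw [hbE'] at hq
    have h1 := mem_filter_support 𝒜 hr
    have h2 := mem_filter_support 𝒜 hq
    rw [h1]
    exact fun hc => h2 hc.symm
  have hEP : star (𝒜.c0Map F bE') * 𝒜.c0Map F bP = 0 := by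
    refine c0Map_star_mul_eq_zero 𝒜 F hF horth _ _ fun r hr q hq => ?_
    rw [hbE'] at hr
    rw [hbP] at hq
    have h1 := mem_filter_support 𝒜 hr
    have h2 := mem_filter_support 𝒜 hq
    rw [h2]
    exact h1
  have e1 : 𝒜.c0Map F bR = 𝒜.c0Map F bP + 𝒜.c0Map F bE' := by
    rw [← hsplit, c0Map_add 𝒜 F hF]
  have e2 : star (𝒜.c0Map F bR) * 𝒜.c0Map F bR =
      star (𝒜.c0Map F bP) * 𝒜.c0Map F bP + star (𝒜.c0Map F bE') * 𝒜.c0Map F bE' := by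
    rw [e1, star_add, add_mul, mul_add, mul_add, hPE, hEP]
    simp only [add_zero, zero_add]
  have hsq : ‖𝒜.c0Map F bP‖ ^ 2 ≤ ‖𝒜.c0Map F bR‖ ^ 2 := by
    calc ‖𝒜.c0Map F bP‖ ^ 2 = ‖star (𝒜.c0Map F bP) * 𝒜.c0Map F bP‖ := by
          rw [CStarRing.norm_star_mul_self]; ring
    _ ≤ ‖star (𝒜.c0Map F bP) * 𝒜.c0Map F bP + star (𝒜.c0Map F bE') * 𝒜.c0Map F bE'‖ :=
          norm_star_mul_le_add _ _
    _ = ‖star (𝒜.c0Map F bR) * 𝒜.c0Map F bR‖ := by rw [e2]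
    _ = ‖𝒜.c0Map F bR‖ ^ 2 := by rw [CStarRing.norm_star_mul_self]; ring
  have step2 : ‖𝒜.c0Map F bP‖ ≤ ‖𝒜.c0Map F bR‖ := by
    nlinarith [norm_nonneg (𝒜.c0Map F bP), norm_nonneg (𝒜.c0Map F bR)]
  have hPsingle : bP = DFinsupp.single p (b p) := by
    ext q
    rw [hbP, hbR, DFinsupp.filter_apply, DFinsupp.filter_apply]
    rcases eq_or_ne p q with rfl | hne
    · simp
    · rw [DFinsupp.single_eq_of_ne hne.symm]
      split_ifs with h1 h2
      · exact absurd (Prod.ext h2 h1).symm hne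
      · rfl
      · rfl
  have hfinal : ‖𝒜.c0Map F bP‖ = ‖b p‖ := by
    rw [hPsingle, c0Map_single 𝒜 F hF, hiso]
  rw [← hfinal]
  exact step2.trans step1

end Cat2

section Cat3

variable (𝒜 : CStarCategory) {B : Type*} [NonUnitalCStarAlgebra B]
  (F : ∀ {x y : 𝒜.Obj}, 𝒜.Hom x y → B)
  (hF : 𝒜.IsCStarFunctorTo F)
  (horth : ∀ {x y z w : 𝒜.Obj} (f : 𝒜.Hom y z) (g : 𝒜.Hom x w),
      w ≠ y → F f * F g = 0)
  (hiso : ∀ {x y : 𝒜.Obj} (f : 𝒜.Hom x y), ‖F f‖ = ‖f‖)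
  (hinj : Function.Injective (𝒜.c0Map F))

include hF horth hiso hinj in
lemma seminorm_le (ρ : 𝒜.C0 → ℝ) (hρ : 𝒜.IsCStarSeminorm ρ) (a : 𝒜.C0) :
    ρ a ≤ ‖𝒜.c0Map F a‖ := by
  set T : Finset 𝒜.Obj := a.support.image Prod.fst ∪ a.support.image Prod.snd with hT
  set V : Set 𝒜.C0 := {b | ∀ p : 𝒜.Obj × 𝒜.Obj, p ∉ T ×ˢ T → b p = 0} with hV
  have haV : a ∈ V := by
    intro p hp
    by_contra hne
    apply hp
    have hmem : p ∈ a.support := DFinsupp.mem_support_iff.mpr hne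
    rw [Finset.mem_product]
    exact ⟨Finset.mem_union_left _ (Finset.mem_image_of_mem Prod.fst hmem),
      Finset.mem_union_right _ (Finset.mem_image_of_mem Prod.snd hmem)⟩
  have hsupp : ∀ b ∈ V, ∀ q ∈ DFinsupp.support b, q ∈ T ×ˢ T := by
    intro b hb q hq
    by_contra h
    exact (DFinsupp.mem_support_iff.mp hq) (hb q h)
  have hV0 : (0 : 𝒜.C0) ∈ V := fun p _ => rfl
  have hVadd : ∀ b c, b ∈ V → c ∈ V → b + c ∈ V := fun b c hb hc p hp => by
    rw [DFinsupp.add_apply, hb p hp, hc p hp, add_zero]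
  have hVsmul : ∀ (z : ℂ) (b), b ∈ V → z • b ∈ V := fun z b hb p hp => by
    rw [DFinsupp.smul_apply, hb p hp, smul_zero]
  have hVstar : ∀ b, b ∈ V → 𝒜.c0Star b ∈ V := by
    intro b hb p hp
    rw [CStarCategory.c0Star, DFinsupp.sum_apply]
    refine Finset.sum_eq_zero fun q hq => ?_
    refine DFinsupp.single_eq_of_ne fun hc => ?_
    apply hp
    rw [hc]
    have h2 := Finset.mem_product.mp (hsupp b hb q hq)
    exact Finset.mem_product.mpr ⟨h2.2, h2.1⟩
  have hVmul : ∀ b c, b ∈ V → c ∈ V → 𝒜.c0Mul b c ∈ V := by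
    intro b c hb hc p hp
    rw [CStarCategory.c0Mul, DFinsupp.sum_apply]
    refine Finset.sum_eq_zero fun q hq => ?_
    dsimp only
    rw [DFinsupp.sum_apply]
    refine Finset.sum_eq_zero fun r hr => ?_
    dsimp only
    split_ifs with h
    · refine DFinsupp.single_eq_of_ne fun hc' => ?_
      apply hp
      rw [hc']
      have h2 := Finset.mem_product.mp (hsupp b hb q hq)
      have h3 := Finset.mem_product.mp (hsupp c hc r hr)
      exact Finset.mem_product.mpr ⟨h3.1, h2.2⟩
    · rfl
  set M : NonUnitalStarSubalgebra ℂ B :=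
    { carrier := 𝒜.c0Map F '' V
      zero_mem' := ⟨0, hV0, c0Map_zero 𝒜 F⟩
      add_mem' := by
        rintro _ _ ⟨b, hb, rfl⟩ ⟨c, hc, rfl⟩
        exact ⟨b + c, hVadd b c hb hc, c0Map_add 𝒜 F hF b c⟩
      mul_mem' := by
        rintro _ _ ⟨b, hb, rfl⟩ ⟨c, hc, rfl⟩
        exact ⟨𝒜.c0Mul b c, hVmul b c hb hc, c0Map_mul 𝒜 F hF horth b c⟩
      smul_mem' := by
        rintro z _ ⟨b, hb, rfl⟩
        exact ⟨z • b, hVsmul z b hb, c0Map_smul 𝒜 F hF z b⟩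
      star_mem' := by
        rintro _ ⟨b, hb, rfl⟩
        exact ⟨𝒜.c0Star b, hVstar b hb, c0Map_star 𝒜 F hF b⟩ } with hM
  -- the finite product space
  let ι := {p // p ∈ T ×ˢ T}
  let E := ∀ i : ι, 𝒜.Hom i.1.1 i.1.2
  let L : E →ₗ[ℂ] B :=
    { toFun := fun v => ∑ i : ι, F (v i)
      map_add' := by
        intro v w
        rw [← Finset.sum_add_distrib]
        exact Finset.sum_congr rfl fun i _ => hF.map_add _ _
      map_smul' := by
        intro z v
        rw [RingHom.id_apply, Finset.smul_sum]
        exact Finset.sum_congr rfl fun i _ => hF.map_smul z _ }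
  let toC0 : E → 𝒜.C0 := fun v => ∑ i : ι, DFinsupp.single i.1 (v i)
  have htoC0V : ∀ v, toC0 v ∈ V := by
    intro v p hp
    rw [DFinsupp.finset_sum_apply]
    refine Finset.sum_eq_zero fun i _ => ?_
    exact DFinsupp.single_eq_of_ne fun hc => hp (hc ▸ i.2)
  have hΦtoC0 : ∀ v, 𝒜.c0Map F (toC0 v) = L v := by
    intro v
    have h0 := map_sum (AddMonoidHom.mk' (𝒜.c0Map F) (c0Map_add 𝒜 F hF))
      (fun i : ι => DFinsupp.single i.1 (v i)) Finset.univ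
    exact h0.trans (Finset.sum_congr rfl fun i _ => c0Map_single 𝒜 F hF _ _)
  have htoC0_apply : ∀ (v : E) (i : ι), toC0 v i.1 = v i := by
    intro v i
    rw [DFinsupp.finset_sum_apply]
    refine (Finset.sum_eq_single_of_mem i (Finset.mem_univ i) fun j _ hj => ?_).trans ?_
    · exact DFinsupp.single_eq_of_ne fun hc => hj (Subtype.ext hc.symm)
    · exact DFinsupp.single_eq_same
  have hLbound : ∀ v : E, ‖L v‖ ≤ (Finset.univ.card (α := ι) : ℝ) * ‖v‖ := by
    intro v
    calc ‖L v‖ ≤ ∑ i : ι, ‖F (v i)‖ := norm_sum_le _ _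
    _ ≤ ∑ _i : ι, ‖v‖ := by
        refine Finset.sum_le_sum fun i _ => ?_
        rw [hiso]
        exact norm_le_pi_norm v i
    _ = (Finset.univ.card (α := ι) : ℝ) * ‖v‖ := by
        rw [Finset.sum_const, nsmul_eq_mul]
  let Lc := L.mkContinuous _ hLbound
  have hanti : AntilipschitzWith 1 Lc := by
    refine ContinuousLinearMap.antilipschitz_of_bound Lc fun v => ?_
    rw [NNReal.coe_one, one_mul]
    refine pi_norm_le_iff_of_nonneg (norm_nonneg _) |>.mpr fun i => ?_
    have h1 : Lc v = 𝒜.c0Map F (toC0 v) := (hΦtoC0 v).symm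
    rw [h1, ← htoC0_apply v i]
    exact entry_norm_le 𝒜 F hF horth hiso (toC0 v) i.1
  have hrange : (M : Set B) = Set.range Lc := by
    apply Set.eq_of_subset_of_subset
    · rintro _ ⟨b, hb, rfl⟩
      refine ⟨fun i => b i.1, ?_⟩
      have hb' : toC0 (fun i => b i.1) = b := by
        ext p
        by_cases hp : p ∈ T ×ˢ T
        · exact htoC0_apply _ ⟨p, hp⟩
        · rw [htoC0V _ p hp, hb p hp]
      calc Lc (fun i => b i.1) = 𝒜.c0Map F (toC0 (fun i => b i.1)) := (hΦtoC0 _).symm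
      _ = 𝒜.c0Map F b := by rw [hb']
    · rintro _ ⟨v, rfl⟩
      exact ⟨toC0 v, htoC0V v, hΦtoC0 v⟩
  haveI hclosedI : IsClosed ((M : Set B)) := by
    rw [hrange]
    exact hanti.isClosed_range Lc.uniformContinuous
  have hmem : ∀ m : M, ∃ b, b ∈ V ∧ 𝒜.c0Map F b = ↑m := fun m => m.2
  choose g hg1 hg2 using hmem
  have hgadd : ∀ m n : M, g (m + n) = g m + g n := by
    intro m n
    apply hinj
    rw [c0Map_add 𝒜 F hF, hg2, hg2, hg2]
    rfl
  have hgmul : ∀ m n : M, g (m * n) = 𝒜.c0Mul (g m) (g n) := by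
    intro m n
    apply hinj
    rw [c0Map_mul 𝒜 F hF horth, hg2, hg2, hg2]
    rfl
  have hgsmul : ∀ (c : ℂ) (m : M), g (c • m) = c • g m := by
    intro c m
    apply hinj
    rw [c0Map_smul 𝒜 F hF, hg2, hg2]
    rfl
  have hgstar : ∀ m : M, g (star m) = 𝒜.c0Star (g m) := by
    intro m
    apply hinj
    rw [c0Map_star 𝒜 F hF, hg2, hg2]
    rfl
  have key := cstarSeminorm_le_norm (A := M) (fun m => ρ (g m))
    (fun m => hρ.nonneg _)
    (fun m n => by
      rw [hgadd]
      exact hρ.add_le _ _)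
    (fun c m => by
      rw [hgsmul]
      exact hρ.smul_eq c _)
    (fun m n => by
      rw [hgmul]
      exact hρ.mul_le _ _)
    (fun m => by
      rw [hgmul, hgstar]
      exact hρ.cstar _)
    (⟨𝒜.c0Map F a, ⟨a, haV, rfl⟩⟩ : M)
  have hga : g (⟨𝒜.c0Map F a, ⟨a, haV, rfl⟩⟩ : M) = a := by
    apply hinj
    rw [hg2]
  rw [hga] at key
  exact key

end Cat3

end CStarCatProofAux

/-- Let `𝒜` be a C*-category, `B` a C*-algebra and `F : 𝒜 → B` a
C*-functor satisfying `F(f) F(g) = 0` whenever `f` and `g` are non-composable morphisms of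
`𝒜`.  Suppose that `F` is isometric on each morphism set and that the induced
*-homomorphism `C*₀F : C*₀𝒜 → B` is injective.  Then the induced *-homomorphism
`C*F : C*𝒜 → B` is isometric; equivalently (as `C*₀𝒜` is dense in `C*𝒜`, whose norm is
the supremum of all C*-seminorms on `C*₀𝒜`), `‖C*₀F(a)‖ = sup {ρ(a) | ρ a C*-seminorm}`
for all `a ∈ C*₀𝒜`. -/
theorem CStarCategory.c0Map_isometric (𝒜 : CStarCategory) (B : Type*)
    [NonUnitalCStarAlgebra B] (F : ∀ {x y : 𝒜.Obj}, 𝒜.Hom x y → B)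
    (hF : 𝒜.IsCStarFunctorTo F)
    (horth : ∀ {x y z w : 𝒜.Obj} (f : 𝒜.Hom y z) (g : 𝒜.Hom x w),
      w ≠ y → F f * F g = 0)
    (hiso : ∀ {x y : 𝒜.Obj} (f : 𝒜.Hom x y), ‖F f‖ = ‖f‖)
    (hinj : Function.Injective (𝒜.c0Map F)) :
    ∀ a : 𝒜.C0, ‖𝒜.c0Map F a‖ = 𝒜.envNorm a := by
  intro a
  have hN : 𝒜.IsCStarSeminorm (fun b => ‖𝒜.c0Map F b‖) :=
    { nonneg := fun b => norm_nonneg _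
      add_le := fun b c => by
        rw [CStarCatProofAux.c0Map_add 𝒜 F hF]
        exact norm_add_le _ _
      smul_eq := fun c b => by
        rw [CStarCatProofAux.c0Map_smul 𝒜 F hF, norm_smul]
      mul_le := fun b c => by
        rw [CStarCatProofAux.c0Map_mul 𝒜 F hF horth]
        exact norm_mul_le _ _
      cstar := fun b => by
        rw [CStarCatProofAux.c0Map_mul 𝒜 F hF horth, CStarCatProofAux.c0Map_star 𝒜 F hF,
          CStarRing.norm_star_mul_self]
        ring }
  have hub : ∀ r ∈ {r : ℝ | ∃ ρ : 𝒜.C0 → ℝ, 𝒜.IsCStarSeminorm ρ ∧ r = ρ a},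
      r ≤ ‖𝒜.c0Map F a‖ := by
    rintro r ⟨ρ, hρ, rfl⟩
    exact CStarCatProofAux.seminorm_le 𝒜 F hF horth hiso hinj ρ hρ a
  rw [CStarCategory.envNorm]
  exact le_antisymm (le_csSup ⟨_, hub⟩ ⟨_, hN, rfl⟩) (csSup_le ⟨_, ⟨_, hN, rfl⟩⟩ hub)
end

section
/- Let 𝒜' be a C*-category with finitely many objects, say N objects, and let ‖·‖ be any C*-norm on the *-algebra C*₀𝒜' whose restriction to each morphism set 𝒜'(x,y) equals the given norm. Then for every a = Σ_{x,y} a_{xy} ∈ C*₀𝒜' with a_{xy} ∈ 𝒜'(x,y), one has max_{x,y} ‖a_{xy}‖ ≤ ‖a‖ ≤ N² max_{x,y} ‖a_{xy}‖. Consequently, C*₀𝒜' is already complete in ‖·‖, and ‖·‖ is the unique C*-norm on C*₀𝒜' restricting to the given norms on morphism sets. -/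
universe u v

/-- A C*-norm on `C*₀𝒜` restricting to the given norm on each morphism set of `𝒜`:
a C*-seminorm that is definite and satisfies `‖a_{xy}‖ = (the given norm)` on the
morphism sets. -/
structure CStarCategory.IsCompatibleCStarNorm (𝒜 : CStarCategory) (nn : 𝒜.C0 → ℝ) : Prop where
  seminorm : 𝒜.IsCStarSeminorm nn
  definite : ∀ a, nn a = 0 → a = 0
  restricts : ∀ (x y : 𝒜.Obj) (f : 𝒜.Hom x y), nn (𝒜.ofHom x y f) = ‖f‖

namespace CStarCategory

variable {𝒜 : CStarCategory}

section BasicHom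

lemma comp_zero' {x y z : 𝒜.Obj} (f : 𝒜.Hom y z) : 𝒜.comp f (0 : 𝒜.Hom x y) = 0 := by
  have h : (0 : 𝒜.Hom x y) = (0 : ℂ) • (0 : 𝒜.Hom x y) := by simp
  rw [h, 𝒜.comp_smul, zero_smul]

lemma zero_comp' {x y z : 𝒜.Obj} (f : 𝒜.Hom x y) : 𝒜.comp (0 : 𝒜.Hom y z) f = 0 := by
  have h : (0 : 𝒜.Hom y z) = (0 : ℂ) • (0 : 𝒜.Hom y z) := by simp
  rw [h, 𝒜.smul_comp, zero_smul]

lemma star_zero' {x y : 𝒜.Obj} : 𝒜.star (0 : 𝒜.Hom x y) = 0 := by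
  have h : (0 : 𝒜.Hom x y) = (0 : ℂ) • (0 : 𝒜.Hom x y) := by simp
  rw [h, 𝒜.star_smul]; simp

lemma comp_neg' {x y z : 𝒜.Obj} (f : 𝒜.Hom y z) (g : 𝒜.Hom x y) :
    𝒜.comp f (-g) = -(𝒜.comp f g) := by
  have : -g = (-1 : ℂ) • g := by simp
  rw [this, 𝒜.comp_smul]; simp

lemma neg_comp' {x y z : 𝒜.Obj} (f : 𝒜.Hom y z) (g : 𝒜.Hom x y) :
    𝒜.comp (-f) g = -(𝒜.comp f g) := by
  have : -f = (-1 : ℂ) • f := by simp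
  rw [this, 𝒜.smul_comp]; simp

lemma comp_sub' {x y z : 𝒜.Obj} (f : 𝒜.Hom y z) (g g' : 𝒜.Hom x y) :
    𝒜.comp f (g - g') = 𝒜.comp f g - 𝒜.comp f g' := by
  rw [sub_eq_add_neg, 𝒜.comp_add, comp_neg', sub_eq_add_neg]

lemma sub_comp' {x y z : 𝒜.Obj} (f f' : 𝒜.Hom y z) (g : 𝒜.Hom x y) :
    𝒜.comp (f - f') g = 𝒜.comp f g - 𝒜.comp f' g := by
  rw [sub_eq_add_neg, 𝒜.add_comp, neg_comp', sub_eq_add_neg]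

lemma star_sub' {x y : 𝒜.Obj} (f g : 𝒜.Hom x y) :
    𝒜.star (f - g) = 𝒜.star f - 𝒜.star g := by
  have : f - g = f + (-1 : ℂ) • g := by simp [sub_eq_add_neg]
  rw [this, 𝒜.star_add, 𝒜.star_smul]
  simp [sub_eq_add_neg]

lemma norm_star' {x y : 𝒜.Obj} (f : 𝒜.Hom x y) : ‖𝒜.star f‖ = ‖f‖ := by
  have key : ∀ {x y : 𝒜.Obj} (g : 𝒜.Hom x y), ‖g‖ ≤ ‖𝒜.star g‖ := by
    intro x y g
    rcases eq_or_ne g 0 with rfl | hg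
    · simp [star_zero']
    · have h1 : ‖g‖ ^ 2 ≤ ‖𝒜.star g‖ * ‖g‖ :=
        (𝒜.norm_star_comp_self g) ▸ 𝒜.norm_comp_le (𝒜.star g) g
      have hg' : 0 < ‖g‖ := norm_pos_iff.mpr hg
      calc ‖g‖ = ‖g‖ ^ 2 / ‖g‖ := by field_simp [pow_two]
        _ ≤ ‖𝒜.star g‖ * ‖g‖ / ‖g‖ := by gcongr
        _ = ‖𝒜.star g‖ := by field_simp
  refine le_antisymm ?_ (key f)
  have := key (𝒜.star f)
  rwa [𝒜.star_star] at this

end BasicHom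

section Instances

variable (𝒜) (x : 𝒜.Obj)

noncomputable instance instNonUnitalRingHom : NonUnitalRing (𝒜.Hom x x) :=
  { (inferInstance : AddCommGroup (𝒜.Hom x x)) with
    mul := 𝒜.comp
    left_distrib := 𝒜.comp_add
    right_distrib := fun a b c => 𝒜.add_comp a b c
    zero_mul := fun a => zero_comp' a
    mul_zero := fun a => comp_zero' a
    mul_assoc := fun a b c => 𝒜.comp_assoc a b c }

lemma mul_def {f g : 𝒜.Hom x x} : f * g = 𝒜.comp f g := rfl

noncomputable instance instStarRingHom : StarRing (𝒜.Hom x x) where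
  star := 𝒜.star
  star_involutive := fun f => 𝒜.star_star f
  star_mul := fun f g => 𝒜.star_comp f g
  star_add := fun f g => 𝒜.star_add f g

lemma star_def {f : 𝒜.Hom x x} : Star.star f = 𝒜.star f := rfl

noncomputable instance instNonUnitalNormedRingHom : NonUnitalNormedRing (𝒜.Hom x x) :=
  { (inferInstance : NormedAddCommGroup (𝒜.Hom x x)),
    (inferInstance : NonUnitalRing (𝒜.Hom x x)) with
    norm_mul_le := fun f g => 𝒜.norm_comp_le f g }

instance instCStarRingHom : CStarRing (𝒜.Hom x x) where
  norm_mul_self_le := fun f => by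
    rw [star_def 𝒜 x, mul_def, 𝒜.norm_star_comp_self f, pow_two]

instance instIsScalarTowerHom : IsScalarTower ℂ (𝒜.Hom x x) (𝒜.Hom x x) :=
  ⟨fun c f g => 𝒜.smul_comp c f g⟩

instance instSMulCommClassHom : SMulCommClass ℂ (𝒜.Hom x x) (𝒜.Hom x x) :=
  ⟨fun c f g => (𝒜.comp_smul c f g).symm⟩

instance instStarModuleHom : StarModule ℂ (𝒜.Hom x x) where
  star_smul := fun c f => 𝒜.star_smul c f

noncomputable instance instNonUnitalCStarAlgebraHom : NonUnitalCStarAlgebra (𝒜.Hom x x) :=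
  { (inferInstance : NonUnitalNormedRing (𝒜.Hom x x)), (inferInstance : StarRing (𝒜.Hom x x)),
    (inferInstance : CompleteSpace (𝒜.Hom x x)), (inferInstance : CStarRing (𝒜.Hom x x)),
    (inferInstance : NormedSpace ℂ (𝒜.Hom x x)), (inferInstance : IsScalarTower ℂ (𝒜.Hom x x) (𝒜.Hom x x)),
    (inferInstance : SMulCommClass ℂ (𝒜.Hom x x) (𝒜.Hom x x)),
    (inferInstance : StarModule ℂ (𝒜.Hom x x)) with }

end Instances

section Approx

variable {𝒜 : CStarCategory}

lemma abs_key (δ t : ℝ) (hδ : 0 < δ) : |t * δ^2 / (t^2 + δ)^2| ≤ Real.sqrt δ := by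
  have hpos : 0 < (t^2 + δ)^2 := by positivity
  have hs : Real.sqrt δ ^ 2 = δ := Real.sq_sqrt hδ.le
  have hs0 : 0 < Real.sqrt δ := Real.sqrt_pos.mpr hδ
  rw [abs_div, abs_of_pos hpos, div_le_iff₀ hpos, abs_mul]
  have habs : |δ^2| = δ^2 := abs_of_pos (by positivity)
  rw [habs]
  have h1 : 2 * |t| * Real.sqrt δ ≤ t^2 + δ := by
    nlinarith [sq_nonneg (|t| - Real.sqrt δ), sq_abs t]
  have h2 : δ ≤ t^2 + δ := by nlinarith [sq_nonneg t]
  have h3 : (2 * |t| * Real.sqrt δ) * δ ≤ (t^2 + δ)^2 := by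
    calc (2 * |t| * Real.sqrt δ) * δ ≤ (t^2 + δ) * (t^2 + δ) :=
          mul_le_mul h1 h2 hδ.le (by nlinarith [sq_nonneg t])
      _ = (t^2 + δ)^2 := by ring
  calc |t| * δ^2 ≤ 2 * (|t| * δ^2) := by nlinarith [abs_nonneg t]
    _ = Real.sqrt δ * ((2 * |t| * Real.sqrt δ) * δ) := by
        linear_combination (-2*(abs t)*δ) * hs
    _ ≤ Real.sqrt δ * (t^2 + δ)^2 := mul_le_mul_of_nonneg_left h3 hs0.le

lemma exists_right_unit {x y : 𝒜.Obj} (f : 𝒜.Hom x y) {ε : ℝ} (hε : 0 < ε) :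
    ∃ v : 𝒜.Hom x x, ‖v‖ ≤ 1 ∧ 𝒜.star v = v ∧ ‖𝒜.comp f v - f‖ < ε := by
  classical
  set m : 𝒜.Hom x x := 𝒜.comp (𝒜.star f) f with hm_def
  have hm : IsSelfAdjoint m := by
    show Star.star m = m
    rw [star_def, hm_def, 𝒜.star_comp, 𝒜.star_star]
  set δ : ℝ := ε^4/2 with hδ_def
  have hδ : 0 < δ := by positivity
  have hδε : Real.sqrt δ < ε^2 := by
    have : δ < (ε^2)^2 := by rw [hδ_def]; nlinarith
    calc Real.sqrt δ < Real.sqrt ((ε^2)^2) := by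
          exact Real.sqrt_lt_sqrt hδ.le this
      _ = ε^2 := Real.sqrt_sq (by positivity)
  set g : ℝ → ℝ := fun t => t^2 / (t^2 + δ) with hg_def
  have hgc : Continuous g := by
    apply Continuous.div (by fun_prop) (by fun_prop)
    intro t; positivity
  have hg0 : g 0 = 0 := by simp [hg_def]
  have hg_bd : ∀ t : ℝ, |g t| ≤ 1 := by
    intro t
    rw [hg_def]
    rw [abs_div, abs_of_nonneg (by positivity : (0:ℝ) ≤ t^2),
      abs_of_pos (by positivity : (0:ℝ) < t^2 + δ), div_le_one (by positivity)]
    nlinarith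
  set v : 𝒜.Hom x x := cfcₙ g m with hv_def
  have hv_sa : IsSelfAdjoint v := cfcₙ_predicate g m
  have hv_star : 𝒜.star v = v := hv_sa
  have hv1 : ‖v‖ ≤ 1 := norm_cfcₙ_le fun t _ => hg_bd t
  -- identify star w * w with a cfcₙ
  have hidc : ContinuousOn (fun t : ℝ => t) (quasispectrum ℝ m) := continuous_id.continuousOn
  have hgc' : ContinuousOn g (quasispectrum ℝ m) := hgc.continuousOn
  have h1 : cfcₙ (fun t : ℝ => t * g t) m = m * v := by
    rw [cfcₙ_mul (fun t : ℝ => t) g m hidc rfl hgc' hg0, cfcₙ_id' ℝ m hm]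
  have h2 : cfcₙ (fun t : ℝ => g t * t) m = v * m := by
    rw [cfcₙ_mul g (fun t : ℝ => t) m hgc' hg0 hidc rfl, cfcₙ_id' ℝ m hm]
  have hc1 : ContinuousOn (fun t : ℝ => t * g t) (quasispectrum ℝ m) := (continuous_id.mul hgc).continuousOn
  have h3 : cfcₙ (fun t : ℝ => g t * (t * g t)) m = v * (m * v) := by
    rw [cfcₙ_mul g (fun t : ℝ => t * g t) m hgc' hg0 hc1 (by simp [hg0]), h1]
  have hc3 : ContinuousOn (fun t : ℝ => g t * (t * g t)) (quasispectrum ℝ m) :=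
    (hgc.mul (continuous_id.mul hgc)).continuousOn
  have hc2 : ContinuousOn (fun t : ℝ => g t * t) (quasispectrum ℝ m) := (hgc.mul continuous_id).continuousOn
  have h5 : cfcₙ (fun t : ℝ => g t * (t * g t) - g t * t) m = v * (m * v) - v * m := by
    rw [cfcₙ_sub _ _ m hc3 (by simp [hg0]) hc2 (by simp [hg0]), h3, h2]
  have h6 : cfcₙ (fun t : ℝ => t * g t - t) m = m * v - m := by
    rw [cfcₙ_sub _ _ m hc1 (by simp [hg0]) hidc rfl, h1, cfcₙ_id' ℝ m hm]
  have h7 : cfcₙ (fun t : ℝ => (g t * (t * g t) - g t * t) - (t * g t - t)) m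
      = (v * (m * v) - v * m) - (m * v - m) := by
    rw [cfcₙ_sub (fun t : ℝ => g t * (t * g t) - g t * t) (fun t : ℝ => t * g t - t) m (hc3.sub hc2) (by simp [hg0]) (hc1.sub hidc) (by simp [hg0]), h5, h6]
  -- norm bound
  have hfun : ∀ t : ℝ, (g t * (t * g t) - g t * t) - (t * g t - t) = t * δ^2 / (t^2 + δ)^2 := by
    intro t
    have ht : t^2 + δ ≠ 0 := by positivity
    simp only [hg_def]
    field_simp
    try ring
  have hnorm : ‖(v * (m * v) - v * m) - (m * v - m)‖ ≤ Real.sqrt δ := by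
    rw [← h7]
    refine norm_cfcₙ_le fun t _ => ?_
    rw [Real.norm_eq_abs, hfun t]
    exact abs_key δ t hδ
  -- expand star w * w
  set w : 𝒜.Hom x y := 𝒜.comp f v - f with hw_def
  have hsw : 𝒜.star w = 𝒜.comp v (𝒜.star f) - 𝒜.star f := by
    rw [hw_def, star_sub', 𝒜.star_comp, hv_star]
  have hexp : 𝒜.comp (𝒜.star w) w = (v * (m * v) - v * m) - (m * v - m) := by
    rw [hsw, hw_def]
    rw [sub_comp', comp_sub', comp_sub']
    have e1 : 𝒜.comp (𝒜.comp v (𝒜.star f)) (𝒜.comp f v) = v * (m * v) := by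
      rw [𝒜.comp_assoc v (𝒜.star f) (𝒜.comp f v), ← 𝒜.comp_assoc (𝒜.star f) f v]
      rfl
    have e2 : 𝒜.comp (𝒜.comp v (𝒜.star f)) f = v * m := by
      rw [𝒜.comp_assoc v (𝒜.star f) f]
      rfl
    have e3 : 𝒜.comp (𝒜.star f) (𝒜.comp f v) = m * v := by
      rw [← 𝒜.comp_assoc (𝒜.star f) f v]
      rfl
    rw [e1, e2, e3, hm_def]
  have hwsq : ‖w‖^2 ≤ Real.sqrt δ := by
    rw [← 𝒜.norm_star_comp_self w, hexp]
    exact hnorm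
  have hwlt : ‖w‖ < ε := by
    have : ‖w‖^2 < ε^2 := lt_of_le_of_lt hwsq hδε
    exact lt_of_pow_lt_pow_left₀ 2 hε.le this
  exact ⟨v, hv1, hv_star, hwlt⟩

lemma exists_left_unit {x y : 𝒜.Obj} (f : 𝒜.Hom x y) {ε : ℝ} (hε : 0 < ε) :
    ∃ u : 𝒜.Hom y y, ‖u‖ ≤ 1 ∧ ‖𝒜.comp u f - f‖ < ε := by
  obtain ⟨v, hv1, hvs, hval⟩ := exists_right_unit (𝒜.star f) hε
  refine ⟨v, hv1, ?_⟩
  have : 𝒜.comp v f - f = 𝒜.star (𝒜.comp (𝒜.star f) v - 𝒜.star f) := by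
    rw [star_sub', 𝒜.star_comp, hvs, 𝒜.star_star]
  rw [this, norm_star']
  exact hval

end Approx

section C0Lemmas

open scoped Classical

variable {𝒜 : CStarCategory}

lemma cast_zero {w y z : 𝒜.Obj} (h : y = z) : (h ▸ (0 : 𝒜.Hom w y) : 𝒜.Hom w z) = 0 := by
  subst h; rfl

lemma cast_add {w y z : 𝒜.Obj} (h : y = z) (g g' : 𝒜.Hom w y) :
    (h ▸ (g + g') : 𝒜.Hom w z) = h ▸ g + h ▸ g' := by
  subst h; rfl

lemma sum_fun_zero {a : 𝒜.C0} : (DFinsupp.sum a fun _ _ => (0 : 𝒜.C0)) = 0 := by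
  simp [DFinsupp.sum]

lemma sum_add_fun {a : 𝒜.C0} {F G : ∀ p : 𝒜.Obj × 𝒜.Obj, 𝒜.Hom p.1 p.2 → 𝒜.C0} :
    (DFinsupp.sum a fun p f => F p f + G p f) = DFinsupp.sum a F + DFinsupp.sum a G := by
  unfold DFinsupp.sum
  exact Finset.sum_add_distrib

lemma c0Mul_zero_left (b : 𝒜.C0) : 𝒜.c0Mul 0 b = 0 := by
  unfold c0Mul
  exact DFinsupp.sum_zero_index

lemma c0Mul_zero_right (a : 𝒜.C0) : 𝒜.c0Mul a 0 = 0 := by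
  unfold c0Mul
  calc DFinsupp.sum a (fun p f => DFinsupp.sum (0 : 𝒜.C0) fun q g =>
        if h : q.2 = p.1 then DFinsupp.single (q.1, p.2) (𝒜.comp f (h ▸ g)) else 0)
      = DFinsupp.sum a fun _ _ => (0 : 𝒜.C0) := by
        refine congrArg (DFinsupp.sum a) ?_
        funext p f; exact DFinsupp.sum_zero_index
    _ = 0 := sum_fun_zero

lemma c0Mul_add_left (a a' b : 𝒜.C0) :
    𝒜.c0Mul (a + a') b = 𝒜.c0Mul a b + 𝒜.c0Mul a' b := by
  unfold c0Mul
  refine DFinsupp.sum_add_index ?_ ?_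
  · intro p
    calc (DFinsupp.sum b fun q g =>
          if h : q.2 = p.1 then DFinsupp.single (q.1, p.2) (𝒜.comp 0 (h ▸ g)) else 0)
        = DFinsupp.sum b fun _ _ => (0 : 𝒜.C0) := by
          congr 1; funext q g
          split_ifs with h
          · rw [zero_comp', DFinsupp.single_zero]
          · rfl
      _ = 0 := sum_fun_zero
  · intro p f f'
    calc (DFinsupp.sum b fun q g =>
          if h : q.2 = p.1 then DFinsupp.single (q.1, p.2) (𝒜.comp (f + f') (h ▸ g)) else 0)
        = DFinsupp.sum b fun q g =>
            (if h : q.2 = p.1 then DFinsupp.single (q.1, p.2) (𝒜.comp f (h ▸ g)) else 0) +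
            (if h : q.2 = p.1 then DFinsupp.single (q.1, p.2) (𝒜.comp f' (h ▸ g)) else 0) := by
          congr 1; funext q g
          split_ifs with h
          · rw [𝒜.add_comp, DFinsupp.single_add]
          · rw [add_zero]
      _ = _ := sum_add_fun

lemma c0Mul_add_right (a b b' : 𝒜.C0) :
    𝒜.c0Mul a (b + b') = 𝒜.c0Mul a b + 𝒜.c0Mul a b' := by
  unfold c0Mul
  calc DFinsupp.sum a (fun p f => DFinsupp.sum (b + b') fun q g =>
        if h : q.2 = p.1 then DFinsupp.single (q.1, p.2) (𝒜.comp f (h ▸ g)) else 0)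
      = DFinsupp.sum a fun p f =>
          (DFinsupp.sum b fun q g =>
            if h : q.2 = p.1 then DFinsupp.single (q.1, p.2) (𝒜.comp f (h ▸ g)) else 0) +
          (DFinsupp.sum b' fun q g =>
            if h : q.2 = p.1 then DFinsupp.single (q.1, p.2) (𝒜.comp f (h ▸ g)) else 0) := by
        congr 1; funext p f
        refine DFinsupp.sum_add_index ?_ ?_
        · intro q
          split_ifs with h
          · rw [cast_zero, comp_zero', DFinsupp.single_zero]
          · rfl
        · intro q g g'
          split_ifs with h
          · rw [cast_add, 𝒜.comp_add, DFinsupp.single_add]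
          · rw [add_zero]
    _ = _ := sum_add_fun

lemma c0Mul_single_single {p q : 𝒜.Obj × 𝒜.Obj} (f : 𝒜.Hom p.1 p.2) (g : 𝒜.Hom q.1 q.2) :
    𝒜.c0Mul (DFinsupp.single p f) (DFinsupp.single q g) =
      if h : q.2 = p.1 then DFinsupp.single (q.1, p.2) (𝒜.comp f (h ▸ g)) else 0 := by
  unfold c0Mul
  rw [DFinsupp.sum_single_index, DFinsupp.sum_single_index]
  · split_ifs with h
    · rw [cast_zero, comp_zero', DFinsupp.single_zero]
    · rfl
  · rw [DFinsupp.sum_single_index]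
    · split_ifs with h
      · rw [zero_comp', DFinsupp.single_zero]
      · rfl
    · split_ifs with h
      · rw [cast_zero, zero_comp', DFinsupp.single_zero]
      · rfl

lemma c0Mul_single_comp {x y z : 𝒜.Obj} (f : 𝒜.Hom y z) (g : 𝒜.Hom x y) :
    𝒜.c0Mul (DFinsupp.single ((y, z) : 𝒜.Obj × 𝒜.Obj) f)
        (DFinsupp.single ((x, y) : 𝒜.Obj × 𝒜.Obj) g) =
      DFinsupp.single ((x, z) : 𝒜.Obj × 𝒜.Obj) (𝒜.comp f g) := by
  rw [c0Mul_single_single (p := ((y, z) : 𝒜.Obj × 𝒜.Obj)) (q := ((x, y) : 𝒜.Obj × 𝒜.Obj)) f g,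
    dif_pos rfl]

lemma c0Mul_sandwich (a : 𝒜.C0) (x y : 𝒜.Obj) (u : 𝒜.Hom y y) (v : 𝒜.Hom x x) :
    𝒜.c0Mul (𝒜.ofHom y y u) (𝒜.c0Mul a (𝒜.ofHom x x v)) =
      𝒜.ofHom x y (𝒜.comp u (𝒜.comp (a (x, y)) v)) := by
  unfold ofHom
  induction a using DFinsupp.induction with
  | h0 =>
    rw [c0Mul_zero_left, c0Mul_zero_right]
    simp only [DFinsupp.zero_apply, comp_zero', zero_comp', DFinsupp.single_zero]
  | ha p f rest hrp hf ih =>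
    rw [c0Mul_add_left, c0Mul_add_right, ih, DFinsupp.add_apply]
    obtain ⟨p1, p2⟩ := p
    by_cases h1 : x = p1
    · subst h1
      rw [(c0Mul_single_comp (x := x) (y := x) (z := p2) f v :
        𝒜.c0Mul (DFinsupp.single ((x, p2) : 𝒜.Obj × 𝒜.Obj) f)
          (DFinsupp.single ((x, x) : 𝒜.Obj × 𝒜.Obj) v) = _)]
      by_cases h2 : p2 = y
      · subst h2
        rw [c0Mul_single_comp, DFinsupp.single_eq_same, 𝒜.add_comp, 𝒜.comp_add,
          DFinsupp.single_add]
      · rw [c0Mul_single_single, dif_neg (fun h => h2 h),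
          DFinsupp.single_eq_of_ne (fun hpq => h2 (congrArg Prod.snd hpq).symm), zero_add, zero_add]
    · rw [c0Mul_single_single, dif_neg (fun h => h1 h), c0Mul_zero_right,
        DFinsupp.single_eq_of_ne (fun hpq => h1 ((congrArg Prod.fst hpq) : x = p1)),
        zero_add, zero_add]

end C0Lemmas

section NormLemmas

open scoped Classical

variable {𝒜 : CStarCategory} {nn : 𝒜.C0 → ℝ}

lemma nn_zero (hnn : 𝒜.IsCompatibleCStarNorm nn) : nn 0 = 0 := by
  have h := hnn.seminorm.smul_eq 0 0
  simpa using h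

lemma nn_single (hnn : 𝒜.IsCompatibleCStarNorm nn) (p : 𝒜.Obj × 𝒜.Obj) (f : 𝒜.Hom p.1 p.2) :
    nn (DFinsupp.single p f) = ‖f‖ :=
  hnn.restricts p.1 p.2 f

lemma nn_lower (hnn : 𝒜.IsCompatibleCStarNorm nn) (a : 𝒜.C0) (p : 𝒜.Obj × 𝒜.Obj) :
    ‖a p‖ ≤ nn a := by
  obtain ⟨x, y⟩ := p
  set f : 𝒜.Hom x y := a (x, y) with hf_def
  refine le_of_forall_pos_le_add fun ε hε => ?_
  have hε2 : 0 < ε / 2 := by linarith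
  obtain ⟨v, hv1, -, hvf⟩ := exists_right_unit f hε2
  obtain ⟨u, hu1, huf⟩ := exists_left_unit f hε2
  have hkey : nn (𝒜.c0Mul (𝒜.ofHom y y u) (𝒜.c0Mul a (𝒜.ofHom x x v))) ≤ nn a := by
    have h1 := hnn.seminorm.mul_le (𝒜.ofHom y y u) (𝒜.c0Mul a (𝒜.ofHom x x v))
    have h2 := hnn.seminorm.mul_le a (𝒜.ofHom x x v)
    have hru : nn (𝒜.ofHom y y u) = ‖u‖ := hnn.restricts y y u
    have hrv : nn (𝒜.ofHom x x v) = ‖v‖ := hnn.restricts x x v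
    have hna : 0 ≤ nn a := hnn.seminorm.nonneg a
    calc nn (𝒜.c0Mul (𝒜.ofHom y y u) (𝒜.c0Mul a (𝒜.ofHom x x v)))
        ≤ nn (𝒜.ofHom y y u) * nn (𝒜.c0Mul a (𝒜.ofHom x x v)) := h1
      _ ≤ nn (𝒜.ofHom y y u) * (nn a * nn (𝒜.ofHom x x v)) := by
          apply mul_le_mul_of_nonneg_left h2
          rw [hru]; exact norm_nonneg u
      _ = ‖u‖ * (nn a * ‖v‖) := by rw [hru, hrv]
      _ ≤ 1 * (nn a * 1) := by
          apply mul_le_mul hu1 _ (by positivity) zero_le_one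
          exact mul_le_mul_of_nonneg_left hv1 hna
      _ = nn a := by ring
  have hsand : nn (𝒜.c0Mul (𝒜.ofHom y y u) (𝒜.c0Mul a (𝒜.ofHom x x v)))
      = ‖𝒜.comp u (𝒜.comp f v)‖ := by
    rw [c0Mul_sandwich, hnn.restricts]
  have happrox : ‖f‖ ≤ ‖𝒜.comp u (𝒜.comp f v)‖ + ε := by
    have hdiff : ‖f - 𝒜.comp u (𝒜.comp f v)‖ ≤ ε := by
      have e : f - 𝒜.comp u (𝒜.comp f v) = (f - 𝒜.comp u f) + 𝒜.comp u (f - 𝒜.comp f v) := by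
        rw [comp_sub']
        abel
      calc ‖f - 𝒜.comp u (𝒜.comp f v)‖
          ≤ ‖f - 𝒜.comp u f‖ + ‖𝒜.comp u (f - 𝒜.comp f v)‖ := e ▸ norm_add_le _ _
        _ ≤ ‖f - 𝒜.comp u f‖ + ‖u‖ * ‖f - 𝒜.comp f v‖ := by
            exact add_le_add_right (𝒜.norm_comp_le u _) _
        _ ≤ ε / 2 + 1 * (ε / 2) := by
            apply add_le_add
            · rw [← norm_neg]; simpa [neg_sub] using huf.le
            · apply mul_le_mul hu1 _ (norm_nonneg _) zero_le_one
              rw [← norm_neg]; simpa [neg_sub] using hvf.le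
        _ = ε := by ring
    calc ‖f‖ ≤ ‖𝒜.comp u (𝒜.comp f v)‖ + ‖f - 𝒜.comp u (𝒜.comp f v)‖ := by
          have := norm_add_le (𝒜.comp u (𝒜.comp f v)) (f - 𝒜.comp u (𝒜.comp f v))
          simpa using this
      _ ≤ ‖𝒜.comp u (𝒜.comp f v)‖ + ε := add_le_add_right hdiff _
  calc ‖a (x, y)‖ = ‖f‖ := by rw [hf_def]
    _ ≤ ‖𝒜.comp u (𝒜.comp f v)‖ + ε := happrox
    _ = nn (𝒜.c0Mul (𝒜.ofHom y y u) (𝒜.c0Mul a (𝒜.ofHom x x v))) + ε := by rw [hsand]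
    _ ≤ nn a + ε := add_le_add_left hkey _

lemma nn_le_sum (hnn : 𝒜.IsCompatibleCStarNorm nn) (a : 𝒜.C0) :
    nn a ≤ ∑ p ∈ a.support, ‖a p‖ := by
  conv_lhs => rw [← DFinsupp.sum_single (f := a)]
  unfold DFinsupp.sum
  refine le_trans (Finset.le_sum_of_subadditive nn (nn_zero hnn).le hnn.seminorm.add_le _ _) ?_
  refine le_of_eq (Finset.sum_congr rfl fun p _ => ?_)
  exact nn_single hnn p (a p)

lemma nn_le_sum_univ [Fintype 𝒜.Obj] (hnn : 𝒜.IsCompatibleCStarNorm nn) (a : 𝒜.C0) :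
    nn a ≤ ∑ p : 𝒜.Obj × 𝒜.Obj, ‖a p‖ := by
  refine (nn_le_sum hnn a).trans ?_
  exact Finset.sum_le_sum_of_subset_of_nonneg (Finset.subset_univ _)
    (fun p _ _ => norm_nonneg _)

lemma nn_le_card_mul [Fintype 𝒜.Obj] (hnn : 𝒜.IsCompatibleCStarNorm nn)
    {nn' : 𝒜.C0 → ℝ} (hnn' : 𝒜.IsCompatibleCStarNorm nn') (a : 𝒜.C0) :
    nn a ≤ (Fintype.card (𝒜.Obj × 𝒜.Obj) : ℝ) * nn' a := by
  refine (nn_le_sum_univ hnn a).trans ?_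
  calc ∑ p : 𝒜.Obj × 𝒜.Obj, ‖a p‖ ≤ ∑ _p : 𝒜.Obj × 𝒜.Obj, nn' a :=
        Finset.sum_le_sum fun p _ => nn_lower hnn' a p
    _ = (Fintype.card (𝒜.Obj × 𝒜.Obj) : ℝ) * nn' a := by
        rw [Finset.sum_const, Finset.card_univ, nsmul_eq_mul]

end NormLemmas

end CStarCategory

open scoped Classical in
/-- Let `𝒜'` be a C*-category with finitely many objects, say `N`
objects, and let `‖·‖` be any C*-norm on the *-algebra `C*₀𝒜'` whose restriction to each
morphism set `𝒜'(x,y)` equals the given norm.  Then for every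
`a = Σ_{x,y} a_{xy} ∈ C*₀𝒜'` (`a_{xy} ∈ 𝒜'(x,y)`) one has
`max_{x,y} ‖a_{xy}‖ ≤ ‖a‖ ≤ N² max_{x,y} ‖a_{xy}‖`.  Consequently `C*₀𝒜'` is already
complete in `‖·‖` (every Cauchy sequence converges), and `‖·‖` is the unique C*-norm on
`C*₀𝒜'` restricting to the given norms on morphism sets. -/
theorem CStarCategory.norm_estimate_of_finite (𝒜 : CStarCategory) [Fintype 𝒜.Obj]
    (nn : 𝒜.C0 → ℝ) (hnn : 𝒜.IsCompatibleCStarNorm nn) :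
    (∀ (a : 𝒜.C0) (p : 𝒜.Obj × 𝒜.Obj), ‖a p‖ ≤ nn a) ∧
    (∀ a : 𝒜.C0, nn a ≤ (Fintype.card 𝒜.Obj : ℝ) ^ 2 * ⨆ p : 𝒜.Obj × 𝒜.Obj, ‖a p‖) ∧
    (∀ u : ℕ → 𝒜.C0,
      (∀ ε : ℝ, 0 < ε → ∃ N : ℕ, ∀ m n : ℕ, N ≤ m → N ≤ n → nn (u m - u n) < ε) →
      ∃ l : 𝒜.C0, Filter.Tendsto (fun n => nn (u n - l)) Filter.atTop (nhds 0)) ∧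
    (∀ nn' : 𝒜.C0 → ℝ, 𝒜.IsCompatibleCStarNorm nn' → nn' = nn) := by
  classical
  refine ⟨nn_lower hnn, ?_, ?_, ?_⟩
  · -- upper bound
    intro a
    rcases isEmpty_or_nonempty 𝒜.Obj with hO | hO
    · have ha : a = 0 := by
        ext p
        exact isEmptyElim p
      rw [ha, nn_zero hnn]
      have hcard : (Fintype.card 𝒜.Obj : ℝ) = 0 := by
        rw [Fintype.card_eq_zero]; norm_num
      rw [hcard]
      simp
    · have h1 := nn_le_sum_univ hnn a
      have hbdd : BddAbove (Set.range fun p : 𝒜.Obj × 𝒜.Obj => ‖a p‖) :=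
        Finite.bddAbove_range _
      calc nn a ≤ ∑ p : 𝒜.Obj × 𝒜.Obj, ‖a p‖ := h1
        _ ≤ (Finset.univ : Finset (𝒜.Obj × 𝒜.Obj)).card • ⨆ q : 𝒜.Obj × 𝒜.Obj, ‖a q‖ :=
            Finset.sum_le_card_nsmul _ _ _ fun p _ => le_ciSup hbdd p
        _ = (Fintype.card (𝒜.Obj × 𝒜.Obj) : ℝ) * ⨆ q : 𝒜.Obj × 𝒜.Obj, ‖a q‖ := by
            rw [Finset.card_univ, nsmul_eq_mul]
        _ = (Fintype.card 𝒜.Obj : ℝ) ^ 2 * ⨆ q : 𝒜.Obj × 𝒜.Obj, ‖a q‖ := by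
            rw [Fintype.card_prod]
            push_cast
            ring
  · -- completeness
    intro u hu
    have hcauchy : ∀ p : 𝒜.Obj × 𝒜.Obj, CauchySeq fun n => u n p := by
      intro p
      rw [Metric.cauchySeq_iff]
      intro ε hε
      obtain ⟨N, hN⟩ := hu ε hε
      refine ⟨N, fun m hm n hn => ?_⟩
      rw [dist_eq_norm]
      calc ‖u m p - u n p‖ = ‖(u m - u n) p‖ := by rw [DFinsupp.sub_apply]
        _ ≤ nn (u m - u n) := nn_lower hnn _ p
        _ < ε := hN m n hm hn
    choose l hl using fun p => cauchySeq_tendsto_of_complete (hcauchy p)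
    refine ⟨DFinsupp.equivFunOnFintype.symm l, ?_⟩
    have happly : ∀ (n : ℕ) (p : 𝒜.Obj × 𝒜.Obj),
        (u n - DFinsupp.equivFunOnFintype.symm l) p = u n p - l p := by
      intro n p
      rw [DFinsupp.sub_apply]
      rfl
    refine squeeze_zero (fun n => hnn.seminorm.nonneg _) (fun n => nn_le_sum_univ hnn _) ?_
    have hterm : ∀ p : 𝒜.Obj × 𝒜.Obj,
        Filter.Tendsto (fun n => ‖(u n - DFinsupp.equivFunOnFintype.symm l) p‖)
          Filter.atTop (nhds 0) := by
      intro p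
      simp only [happly]
      exact tendsto_iff_norm_sub_tendsto_zero.mp (hl p)
    have hsum := tendsto_finset_sum (Finset.univ : Finset (𝒜.Obj × 𝒜.Obj))
      (fun p _ => hterm p)
    simpa using hsum
  · -- uniqueness
    intro nn' hnn'
    have key : ∀ (ρ σ : 𝒜.C0 → ℝ), 𝒜.IsCompatibleCStarNorm ρ → 𝒜.IsCompatibleCStarNorm σ →
        ∀ a, ρ a ≤ σ a := by
      intro ρ σ hρ hσ a
      by_contra hlt
      push_neg at hlt
      have hσ0 : 0 < σ a := by
        rcases (hσ.seminorm.nonneg a).eq_or_lt with h | h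
        · exfalso
          have ha : a = 0 := hσ.definite a h.symm
          rw [ha, nn_zero hρ] at hlt
          exact absurd hlt (not_lt.mpr (hσ.seminorm.nonneg 0))
        · exact h
      set s : ℕ → 𝒜.C0 := fun k => Nat.rec a (fun _ b => 𝒜.c0Mul (𝒜.c0Star b) b) k with hs
      have hs0 : s 0 = a := rfl
      have hsucc : ∀ k, s (k + 1) = 𝒜.c0Mul (𝒜.c0Star (s k)) (s k) := fun k => rfl
      have hpow : ∀ (τ : 𝒜.C0 → ℝ), 𝒜.IsCompatibleCStarNorm τ →
          ∀ k, τ (s k) = τ a ^ (2 ^ k) := by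
        intro τ hτ k
        induction k with
        | zero => simp [hs0]
        | succ k ih => rw [hsucc, hτ.seminorm.cstar, ih, ← pow_mul, pow_succ]
      have hk : ∀ k, ρ a ^ (2 ^ k) ≤ (Fintype.card (𝒜.Obj × 𝒜.Obj) : ℝ) * σ a ^ (2 ^ k) := by
        intro k
        have h := nn_le_card_mul hρ hσ (s k)
        rwa [hpow ρ hρ k, hpow σ hσ k] at h
      set t : ℝ := ρ a / σ a with ht
      have ht1 : 1 < t := (one_lt_div hσ0).mpr hlt
      have htk : ∀ k, t ^ (2 ^ k) ≤ (Fintype.card (𝒜.Obj × 𝒜.Obj) : ℝ) := by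
        intro k
        rw [ht, div_pow, div_le_iff₀ (by positivity)]
        exact hk k
      obtain ⟨n, hn⟩ := pow_unbounded_of_one_lt (Fintype.card (𝒜.Obj × 𝒜.Obj) : ℝ) ht1
      have h2n : t ^ n ≤ t ^ (2 ^ n) := pow_le_pow_right₀ ht1.le (Nat.lt_two_pow_self (n := n)).le
      exact absurd (h2n.trans (htk n)) (not_le.mpr hn)
    funext a
    exact le_antisymm (key nn' nn hnn' hnn a) (key nn nn' hnn hnn' a)
end
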